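/- arXiv:2405.15327 — 2 statements merged into one kernel-verified Lean document; each statement's English description precedes it below -/
import Mathlib

section
/- Let Ω ⊆ ℝ² be either the whole plane ℝ², a half-plane ℝ×(a,∞) or ℝ×(−∞,b) with a,b ∈ ℝ, or a strip ℝ×(a,b) with real a < b. Suppose v = (v₁,v₂) is C¹ on the closure of Ω and satisfies v₁∇v₂ − v₂∇v₁ = 0 and div v = ∂ₓ₁v₁ + ∂ₓ₂v₂ = 0 at every point of Ω, and that v₂ = 0 on every (finite) horizontal boundary line of Ω. Then v is a shear flow: there exist a unit vector e = (e₁,e₂) and a function w : ℝ → ℝ such that v(x) = w(−e₂x₁ + e₁x₂)·e for all x; moreover, if Ω ≠ ℝ² then v(x₁,x₂) = (w(x₂), 0) for some function w. -/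
open Real Set MeasureTheory Filter

noncomputable section

/-- Partial derivative in the `x₁` direction. -/
def pd₁ (f : ℝ × ℝ → ℝ) (x : ℝ × ℝ) : ℝ := fderiv ℝ f x (1, 0)

/-- Partial derivative in the `x₂` direction. -/
def pd₂ (f : ℝ × ℝ → ℝ) (x : ℝ × ℝ) : ℝ := fderiv ℝ f x (0, 1)

/-- Euclidean norm of the planar vector `(a, b)`. -/
def nrm (a b : ℝ) : ℝ := Real.sqrt (a ^ 2 + b ^ 2)

/-- The steady incompressible Euler system `v·∇v + ∇P = 0`, `div v = 0` on a set `Ω`. -/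
def EulerOn (v₁ v₂ P : ℝ × ℝ → ℝ) (Ω : Set (ℝ × ℝ)) : Prop :=
  ∀ x ∈ Ω,
    v₁ x * pd₁ v₁ x + v₂ x * pd₂ v₁ x + pd₁ P x = 0 ∧
    v₁ x * pd₁ v₂ x + v₂ x * pd₂ v₂ x + pd₂ P x = 0 ∧
    pd₁ v₁ x + pd₂ v₂ x = 0

/-- The set of flow angles `Θ(v; A)` of the vector field `v = (v₁, v₂)` on `A`. -/
def flowAngles (v₁ v₂ : ℝ × ℝ → ℝ) (A : Set (ℝ × ℝ)) : Set (ℝ × ℝ) :=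
  {u | ∃ x ∈ A, ¬(v₁ x = 0 ∧ v₂ x = 0) ∧
        u = (v₁ x / nrm (v₁ x) (v₂ x), v₂ x / nrm (v₁ x) (v₂ x))}

/-- The closed arc `S_{θ₀,β}` of length `2π - 2β` centered at `(cos θ₀, sin θ₀)`. -/
def arcSet (θ₀ β : ℝ) : Set (ℝ × ℝ) :=
  {u | ∃ θ : ℝ, -π + β + θ₀ ≤ θ ∧ θ ≤ π - β + θ₀ ∧ u = (Real.cos θ, Real.sin θ)}

/-- The unit circle `S¹`. -/
def unitCircle : Set (ℝ × ℝ) := {u | u.1 ^ 2 + u.2 ^ 2 = 1}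

/-- The upper closed semicircle `S¹₊`. -/
def upperSemicircle : Set (ℝ × ℝ) := {u | u.1 ^ 2 + u.2 ^ 2 = 1 ∧ 0 ≤ u.2}

/-- The lower closed semicircle `S¹₋`. -/
def lowerSemicircle : Set (ℝ × ℝ) := {u | u.1 ^ 2 + u.2 ^ 2 = 1 ∧ u.2 ≤ 0}

/-- `v` is a parallel shear flow: `v(x) = w(−e₂x₁ + e₁x₂)·e` for some unit vector `e`. -/
def IsShearFlow (v₁ v₂ : ℝ × ℝ → ℝ) : Prop :=
  ∃ e : ℝ × ℝ, e.1 ^ 2 + e.2 ^ 2 = 1 ∧ ∃ w : ℝ → ℝ,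
    ∀ x : ℝ × ℝ, v₁ x = w (-e.2 * x.1 + e.1 * x.2) * e.1 ∧
                 v₂ x = w (-e.2 * x.1 + e.1 * x.2) * e.2

/-- The open strip `Ω∞ = ℝ × (−1, 1)`. -/
def strip : Set (ℝ × ℝ) := {x | -1 < x.2 ∧ x.2 < 1}

/-- The closed strip `ℝ × [−1, 1]`. -/
def stripCl : Set (ℝ × ℝ) := {x | -1 ≤ x.2 ∧ x.2 ≤ 1}

/-- The open upper half-plane `ℝ²₊ = ℝ × (0, ∞)`. -/
def upperHalf : Set (ℝ × ℝ) := {x | 0 < x.2}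

/-- The closed upper half-plane `ℝ × [0, ∞)`. -/
def upperHalfCl : Set (ℝ × ℝ) := {x | 0 ≤ x.2}

/-- `v(x₁,x₂) = (w(x₂), 0)` on the closed strip. -/
def shearOnStrip (v₁ v₂ : ℝ × ℝ → ℝ) : Prop :=
  ∃ w : ℝ → ℝ, ∀ x ∈ stripCl, v₁ x = w x.2 ∧ v₂ x = 0

/-- `v(x₁,x₂) = (w(x₂), 0)` on the closed upper half-plane. -/
def shearOnHalf (v₁ v₂ : ℝ × ℝ → ℝ) : Prop :=
  ∃ w : ℝ → ℝ, ∀ x ∈ upperHalfCl, v₁ x = w x.2 ∧ v₂ x = 0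

/-- The total-curvature integrand `|v₁∇v₂ − v₂∇v₁|² / |v|²` (interpreted as `0` where `v = 0`). -/
def curv (v₁ v₂ : ℝ × ℝ → ℝ) (x : ℝ × ℝ) : ℝ :=
  ((v₁ x * pd₁ v₂ x - v₂ x * pd₁ v₁ x) ^ 2 +
   (v₁ x * pd₂ v₂ x - v₂ x * pd₂ v₁ x) ^ 2) / (v₁ x ^ 2 + v₂ x ^ 2)

def EqCond (v₁ v₂ : ℝ × ℝ → ℝ) (Ω : Set (ℝ × ℝ)) : Prop :=
  ∀ x ∈ Ω, (v₁ x * pd₁ v₂ x - v₂ x * pd₁ v₁ x = 0 ∧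
      v₁ x * pd₂ v₂ x - v₂ x * pd₂ v₁ x = 0) ∧ pd₁ v₁ x + pd₂ v₂ x = 0

lemma clm_eval (L : ℝ × ℝ →L[ℝ] ℝ) (a b : ℝ) : L (a, b) = a * L (1, 0) + b * L (0, 1) := by
  have h : ((a, b) : ℝ × ℝ) = a • ((1 : ℝ), (0 : ℝ)) + b • ((0 : ℝ), (1 : ℝ)) := by
    simp [Prod.ext_iff]
  rw [h, map_add, _root_.map_smul, _root_.map_smul, smul_eq_mul, smul_eq_mul]

lemma key_local1 {v₁ v₂ : ℝ × ℝ → ℝ} {Ω : Set (ℝ × ℝ)}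
    (hv₁ : ContDiff ℝ 1 v₁) (hv₂ : ContDiff ℝ 1 v₂) (hΩo : IsOpen Ω)
    (heq : EqCond v₁ v₂ Ω) {y : ℝ × ℝ} (hy : y ∈ Ω) (h1 : v₁ y ≠ 0) :
    ∃ ε > 0, ∀ t : ℝ, |t| < ε →
      v₁ (y + t • ((v₁ y, v₂ y) : ℝ × ℝ)) = v₁ y ∧
      v₂ (y + t • ((v₁ y, v₂ y) : ℝ × ℝ)) = v₂ y := by
  have hd₁ : Differentiable ℝ v₁ := hv₁.differentiable one_ne_zero
  have hd₂ : Differentiable ℝ v₂ := hv₂.differentiable one_ne_zero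
  have hU : IsOpen (Ω ∩ {z | v₁ z ≠ 0}) :=
    hΩo.inter (isOpen_compl_singleton.preimage hv₁.continuous)
  obtain ⟨r, hr0, hball⟩ := Metric.isOpen_iff.1 hU y ⟨hy, h1⟩
  set c : ℝ × ℝ := (v₁ y, v₂ y) with hc
  -- the quotient has zero derivative on the ball
  have hq0 : ∀ z ∈ Metric.ball y r, fderiv ℝ (fun w => v₂ w * (v₁ w)⁻¹) z = 0 := by
    intro z hz
    obtain ⟨hzΩ, hz1⟩ := hball hz
    have hinv : HasFDerivAt (fun w => (v₁ w)⁻¹) ((-(v₁ z ^ 2)⁻¹) • fderiv ℝ v₁ z) z :=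
      (hasDerivAt_inv hz1).comp_hasFDerivAt z (hd₁ z).hasFDerivAt
    have hmul : HasFDerivAt (fun w => v₂ w * (v₁ w)⁻¹)
        (v₂ z • ((-(v₁ z ^ 2)⁻¹) • fderiv ℝ v₁ z) + (v₁ z)⁻¹ • fderiv ℝ v₂ z) z :=
      (hd₂ z).hasFDerivAt.mul hinv
    rw [hmul.fderiv]
    have hne : v₁ z ≠ 0 := hz1
    obtain ⟨⟨e1, e2⟩, _⟩ := heq z hzΩ
    simp only [pd₁, pd₂] at e1 e2
    apply ContinuousLinearMap.ext
    intro p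
    have hp : p = (p.1, p.2) := rfl
    rw [hp, clm_eval]
    have A1 : (v₂ z • ((-(v₁ z ^ 2)⁻¹) • fderiv ℝ v₁ z) + (v₁ z)⁻¹ • fderiv ℝ v₂ z)
        ((1 : ℝ), (0 : ℝ)) = 0 := by
      simp only [ContinuousLinearMap.add_apply, ContinuousLinearMap.smul_apply, smul_eq_mul]
      field_simp [hne]
      linear_combination e1
    have A2 : (v₂ z • ((-(v₁ z ^ 2)⁻¹) • fderiv ℝ v₁ z) + (v₁ z)⁻¹ • fderiv ℝ v₂ z)
        ((0 : ℝ), (1 : ℝ)) = 0 := by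
      simp only [ContinuousLinearMap.add_apply, ContinuousLinearMap.smul_apply, smul_eq_mul]
      field_simp [hne]
      linear_combination e2
    rw [A1, A2]
    simp
  -- constancy of the quotient on the ball
  set k : ℝ := v₂ y * (v₁ y)⁻¹ with hk
  have hkq : ∀ z ∈ Metric.ball y r, v₂ z * (v₁ z)⁻¹ = k := by
    intro z hz
    exact (convex_ball y r).is_const_of_fderivWithin_eq_zero
      (fun w hw => ((hd₂ w).mul ((hd₁ w).inv (hball hw).2)).differentiableWithinAt)
      (fun w hw => by
        rw [fderivWithin_of_isOpen Metric.isOpen_ball hw]; exact hq0 w hw)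
      hz (Metric.mem_ball_self hr0)
  have hvk : ∀ z ∈ Metric.ball y r, v₂ z = k * v₁ z := by
    intro z hz
    have h := hkq z hz
    have hz1 := (hball hz).2
    rw [← h, mul_assoc, inv_mul_cancel₀ hz1, mul_one]
  -- derivative of v₁, v₂ in direction c vanishes on the ball
  have hder : ∀ z ∈ Metric.ball y r, fderiv ℝ v₁ z c = 0 ∧ fderiv ℝ v₂ z c = 0 := by
    intro z hz
    obtain ⟨hzΩ, hz1⟩ := hball hz
    have hev : fderiv ℝ v₂ z = k • fderiv ℝ v₁ z := by
      have h1 : v₂ =ᶠ[nhds z] fun w => k * v₁ w :=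
        Filter.eventuallyEq_of_mem (Metric.isOpen_ball.mem_nhds hz) fun w hw => hvk w hw
      rw [h1.fderiv_eq, fderiv_const_mul (hd₁ z) k]
    have hdiv := (heq z hzΩ).2
    unfold pd₁ pd₂ at hdiv
    have e2 : fderiv ℝ v₂ z ((0 : ℝ), (1 : ℝ)) = k * fderiv ℝ v₁ z ((0 : ℝ), (1 : ℝ)) := by
      rw [hev]; simp
    have e1 : fderiv ℝ v₂ z ((1 : ℝ), (0 : ℝ)) = k * fderiv ℝ v₁ z ((1 : ℝ), (0 : ℝ)) := by
      rw [hev]; simp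
    have hky : v₂ y = k * v₁ y := hvk y (Metric.mem_ball_self hr0)
    have hA : fderiv ℝ v₁ z ((1 : ℝ), (0 : ℝ)) + k * fderiv ℝ v₁ z ((0 : ℝ), (1 : ℝ)) = 0 := by
      rw [← e2]; exact hdiv
    constructor
    · rw [hc, clm_eval]
      linear_combination v₁ y * hA + fderiv ℝ v₁ z ((0 : ℝ), (1 : ℝ)) * hky
    · rw [hc, clm_eval, e1, e2]
      linear_combination k * v₁ y * hA + k * fderiv ℝ v₁ z ((0 : ℝ), (1 : ℝ)) * hky
  -- conclude by 1-D mean value theorem along the segment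
  refine ⟨r / (‖c‖ + 1), by positivity, fun t ht => ?_⟩
  set ε : ℝ := r / (‖c‖ + 1) with hε
  have hεpos : 0 < ε := by positivity
  have hmem : ∀ s : ℝ, |s| < ε → y + s • c ∈ Metric.ball y r := by
    intro s hs
    have h1 : ‖s • c‖ < r := by
      rw [norm_smul, Real.norm_eq_abs]
      have h2 : |s| * ‖c‖ ≤ |s| * (‖c‖ + 1) := by nlinarith [abs_nonneg s]
      have h3 : |s| * (‖c‖ + 1) < r := by
        rw [hε, lt_div_iff₀ (by positivity)] at hs
        linarith
      linarith
    simpa [Metric.mem_ball, dist_eq_norm] using h1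
  have key : ∀ f : ℝ × ℝ → ℝ, Differentiable ℝ f →
      (∀ z ∈ Metric.ball y r, fderiv ℝ f z c = 0) → f (y + t • c) = f y := by
    intro f hf hzero
    have hders : ∀ s ∈ Ioo (-ε) ε,
        HasDerivWithinAt (fun u : ℝ => f (y + u • c)) ((fun _ => (0 : ℝ)) s) (Ioo (-ε) ε) s := by
      intro s hs
      have hι : HasDerivAt (fun u : ℝ => y + u • c) c s := by
        simpa using ((hasDerivAt_id s).smul_const c).const_add y
      have hcomp := (hf (y + s • c)).hasFDerivAt.comp_hasDerivAt s hι
      have habs : |s| < ε := abs_lt.2 ⟨hs.1, hs.2⟩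
      rw [hzero _ (hmem s habs)] at hcomp
      exact hcomp.hasDerivWithinAt
    have ht0 : (0 : ℝ) ∈ Ioo (-ε) ε := by constructor <;> linarith
    have htε : t ∈ Ioo (-ε) ε := abs_lt.1 ht
    have hle := (convex_Ioo (-ε) ε).norm_image_sub_le_of_norm_hasDerivWithin_le
      (C := 0) hders (fun s _ => by simp) ht0 htε
    simp only [norm_zero, zero_mul] at hle
    have h0 : f (y + t • c) - f (y + (0 : ℝ) • c) = 0 := norm_le_zero_iff.1 hle
    simp only [zero_smul, add_zero] at h0
    linarith
  exact ⟨key v₁ hd₁ fun z hz => (hder z hz).1, key v₂ hd₂ fun z hz => (hder z hz).2⟩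

lemma key_local2 {v₁ v₂ : ℝ × ℝ → ℝ} {Ω : Set (ℝ × ℝ)}
    (hv₁ : ContDiff ℝ 1 v₁) (hv₂ : ContDiff ℝ 1 v₂) (hΩo : IsOpen Ω)
    (heq : EqCond v₁ v₂ Ω) {y : ℝ × ℝ} (hy : y ∈ Ω) (h2 : v₂ y ≠ 0) :
    ∃ ε > 0, ∀ t : ℝ, |t| < ε →
      v₁ (y + t • ((v₁ y, v₂ y) : ℝ × ℝ)) = v₁ y ∧
      v₂ (y + t • ((v₁ y, v₂ y) : ℝ × ℝ)) = v₂ y := by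
  have hd₁ : Differentiable ℝ v₁ := hv₁.differentiable one_ne_zero
  have hd₂ : Differentiable ℝ v₂ := hv₂.differentiable one_ne_zero
  have hU : IsOpen (Ω ∩ {z | v₂ z ≠ 0}) :=
    hΩo.inter (isOpen_compl_singleton.preimage hv₂.continuous)
  obtain ⟨r, hr0, hball⟩ := Metric.isOpen_iff.1 hU y ⟨hy, h2⟩
  set c : ℝ × ℝ := (v₁ y, v₂ y) with hc
  have hq0 : ∀ z ∈ Metric.ball y r, fderiv ℝ (fun w => v₁ w * (v₂ w)⁻¹) z = 0 := by
    intro z hz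
    obtain ⟨hzΩ, hz2⟩ := hball hz
    have hinv : HasFDerivAt (fun w => (v₂ w)⁻¹) ((-(v₂ z ^ 2)⁻¹) • fderiv ℝ v₂ z) z :=
      (hasDerivAt_inv hz2).comp_hasFDerivAt z (hd₂ z).hasFDerivAt
    have hmul : HasFDerivAt (fun w => v₁ w * (v₂ w)⁻¹)
        (v₁ z • ((-(v₂ z ^ 2)⁻¹) • fderiv ℝ v₂ z) + (v₂ z)⁻¹ • fderiv ℝ v₁ z) z :=
      (hd₁ z).hasFDerivAt.mul hinv
    rw [hmul.fderiv]
    have hne : v₂ z ≠ 0 := hz2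
    obtain ⟨⟨e1, e2⟩, _⟩ := heq z hzΩ
    simp only [pd₁, pd₂] at e1 e2
    apply ContinuousLinearMap.ext
    intro p
    have hp : p = (p.1, p.2) := rfl
    rw [hp, clm_eval]
    have A1 : (v₁ z • ((-(v₂ z ^ 2)⁻¹) • fderiv ℝ v₂ z) + (v₂ z)⁻¹ • fderiv ℝ v₁ z)
        ((1 : ℝ), (0 : ℝ)) = 0 := by
      simp only [ContinuousLinearMap.add_apply, ContinuousLinearMap.smul_apply, smul_eq_mul]
      field_simp [hne]
      linear_combination -e1
    have A2 : (v₁ z • ((-(v₂ z ^ 2)⁻¹) • fderiv ℝ v₂ z) + (v₂ z)⁻¹ • fderiv ℝ v₁ z)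
        ((0 : ℝ), (1 : ℝ)) = 0 := by
      simp only [ContinuousLinearMap.add_apply, ContinuousLinearMap.smul_apply, smul_eq_mul]
      field_simp [hne]
      linear_combination -e2
    rw [A1, A2]
    simp
  set k : ℝ := v₁ y * (v₂ y)⁻¹ with hk
  have hkq : ∀ z ∈ Metric.ball y r, v₁ z * (v₂ z)⁻¹ = k := by
    intro z hz
    exact (convex_ball y r).is_const_of_fderivWithin_eq_zero
      (fun w hw => ((hd₁ w).mul ((hd₂ w).inv (hball hw).2)).differentiableWithinAt)
      (fun w hw => by
        rw [fderivWithin_of_isOpen Metric.isOpen_ball hw]; exact hq0 w hw)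
      hz (Metric.mem_ball_self hr0)
  have hvk : ∀ z ∈ Metric.ball y r, v₁ z = k * v₂ z := by
    intro z hz
    have h := hkq z hz
    have hz2 := (hball hz).2
    rw [← h, mul_assoc, inv_mul_cancel₀ hz2, mul_one]
  have hder : ∀ z ∈ Metric.ball y r, fderiv ℝ v₁ z c = 0 ∧ fderiv ℝ v₂ z c = 0 := by
    intro z hz
    obtain ⟨hzΩ, hz2⟩ := hball hz
    have hev : fderiv ℝ v₁ z = k • fderiv ℝ v₂ z := by
      have h1 : v₁ =ᶠ[nhds z] fun w => k * v₂ w :=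
        Filter.eventuallyEq_of_mem (Metric.isOpen_ball.mem_nhds hz) fun w hw => hvk w hw
      rw [h1.fderiv_eq, fderiv_const_mul (hd₂ z) k]
    have hdiv := (heq z hzΩ).2
    simp only [pd₁, pd₂] at hdiv
    have e1 : fderiv ℝ v₁ z ((1 : ℝ), (0 : ℝ)) = k * fderiv ℝ v₂ z ((1 : ℝ), (0 : ℝ)) := by
      rw [hev]; simp
    have e2 : fderiv ℝ v₁ z ((0 : ℝ), (1 : ℝ)) = k * fderiv ℝ v₂ z ((0 : ℝ), (1 : ℝ)) := by
      rw [hev]; simp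
    have hky : v₁ y = k * v₂ y := hvk y (Metric.mem_ball_self hr0)
    have hA : k * fderiv ℝ v₂ z ((1 : ℝ), (0 : ℝ)) + fderiv ℝ v₂ z ((0 : ℝ), (1 : ℝ)) = 0 := by
      rw [← e1]; exact hdiv
    constructor
    · rw [hc, clm_eval, e1, e2]
      linear_combination k * v₂ y * hA + k * fderiv ℝ v₂ z ((1 : ℝ), (0 : ℝ)) * hky
    · rw [hc, clm_eval]
      linear_combination v₂ y * hA + fderiv ℝ v₂ z ((1 : ℝ), (0 : ℝ)) * hky
  refine ⟨r / (‖c‖ + 1), by positivity, fun t ht => ?_⟩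
  set ε : ℝ := r / (‖c‖ + 1) with hε
  have hεpos : 0 < ε := by positivity
  have hmem : ∀ s : ℝ, |s| < ε → y + s • c ∈ Metric.ball y r := by
    intro s hs
    have h1 : ‖s • c‖ < r := by
      rw [norm_smul, Real.norm_eq_abs]
      have h2 : |s| * ‖c‖ ≤ |s| * (‖c‖ + 1) := by nlinarith [abs_nonneg s]
      have h3 : |s| * (‖c‖ + 1) < r := by
        rw [hε, lt_div_iff₀ (by positivity)] at hs
        linarith
      linarith
    simpa [Metric.mem_ball, dist_eq_norm] using h1
  have key : ∀ f : ℝ × ℝ → ℝ, Differentiable ℝ f →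
      (∀ z ∈ Metric.ball y r, fderiv ℝ f z c = 0) → f (y + t • c) = f y := by
    intro f hf hzero
    have hders : ∀ s ∈ Ioo (-ε) ε,
        HasDerivWithinAt (fun u : ℝ => f (y + u • c)) ((fun _ => (0 : ℝ)) s) (Ioo (-ε) ε) s := by
      intro s hs
      have hι : HasDerivAt (fun u : ℝ => y + u • c) c s := by
        simpa using ((hasDerivAt_id s).smul_const c).const_add y
      have hcomp := (hf (y + s • c)).hasFDerivAt.comp_hasDerivAt s hι
      have habs : |s| < ε := abs_lt.2 ⟨hs.1, hs.2⟩
      rw [hzero _ (hmem s habs)] at hcomp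
      exact hcomp.hasDerivWithinAt
    have ht0 : (0 : ℝ) ∈ Ioo (-ε) ε := by constructor <;> linarith
    have htε : t ∈ Ioo (-ε) ε := abs_lt.1 ht
    have hle := (convex_Ioo (-ε) ε).norm_image_sub_le_of_norm_hasDerivWithin_le
      (C := 0) hders (fun s _ => by simp) ht0 htε
    simp only [norm_zero, zero_mul] at hle
    have h0 : f (y + t • c) - f (y + (0 : ℝ) • c) = 0 := norm_le_zero_iff.1 hle
    simp only [zero_smul, add_zero] at h0
    linarith
  exact ⟨key v₁ hd₁ fun z hz => (hder z hz).1, key v₂ hd₂ fun z hz => (hder z hz).2⟩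

lemma key_local {v₁ v₂ : ℝ × ℝ → ℝ} {Ω : Set (ℝ × ℝ)}
    (hv₁ : ContDiff ℝ 1 v₁) (hv₂ : ContDiff ℝ 1 v₂) (hΩo : IsOpen Ω)
    (heq : EqCond v₁ v₂ Ω) {y : ℝ × ℝ} (hy : y ∈ Ω) (hne : ¬(v₁ y = 0 ∧ v₂ y = 0)) :
    ∃ ε > 0, ∀ t : ℝ, |t| < ε →
      v₁ (y + t • ((v₁ y, v₂ y) : ℝ × ℝ)) = v₁ y ∧
      v₂ (y + t • ((v₁ y, v₂ y) : ℝ × ℝ)) = v₂ y := by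
  rcases not_and_or.1 hne with h | h
  · exact key_local1 hv₁ hv₂ hΩo heq hy h
  · exact key_local2 hv₁ hv₂ hΩo heq hy h

lemma seg_pos {v₁ v₂ : ℝ × ℝ → ℝ} {Ω : Set (ℝ × ℝ)}
    (hv₁ : ContDiff ℝ 1 v₁) (hv₂ : ContDiff ℝ 1 v₂) (hΩo : IsOpen Ω)
    (heq : EqCond v₁ v₂ Ω) {x : ℝ × ℝ} (hx : x ∈ Ω) {t : ℝ} (ht : 0 ≤ t)
    (hseg : ∀ s ∈ Icc 0 t, x + s • ((v₁ x, v₂ x) : ℝ × ℝ) ∈ Ω) :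
    v₁ (x + t • ((v₁ x, v₂ x) : ℝ × ℝ)) = v₁ x ∧
    v₂ (x + t • ((v₁ x, v₂ x) : ℝ × ℝ)) = v₂ x := by
  by_cases hc0 : v₁ x = 0 ∧ v₂ x = 0
  · have h : ((v₁ x, v₂ x) : ℝ × ℝ) = 0 := by simp [hc0.1, hc0.2, Prod.ext_iff]
    rw [h]; simp
  · set c : ℝ × ℝ := (v₁ x, v₂ x) with hc
    set A : Set ℝ := {u | u ∈ Icc 0 t ∧ v₁ (x + u • c) = v₁ x ∧ v₂ (x + u • c) = v₂ x} with hA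
    have h0A : (0 : ℝ) ∈ A := by
      refine ⟨⟨le_refl 0, ht⟩, ?_, ?_⟩ <;> simp
    have hAcl : IsClosed A := by
      have hcont : Continuous fun u : ℝ => x + u • c :=
        continuous_const.add (continuous_id.smul continuous_const)
      have : A = (Icc 0 t) ∩ (((fun u : ℝ => v₁ (x + u • c)) ⁻¹' {v₁ x}) ∩
          ((fun u : ℝ => v₂ (x + u • c)) ⁻¹' {v₂ x})) := by
        ext u; simp [hA, and_assoc]
      rw [this]
      exact isClosed_Icc.inter
        ((isClosed_singleton.preimage (hv₁.continuous.comp hcont)).inter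
         (isClosed_singleton.preimage (hv₂.continuous.comp hcont)))
    have hbdd : BddAbove A := ⟨t, fun u hu => hu.1.2⟩
    set m := sSup A with hm
    have hmA : m ∈ A := hAcl.csSup_mem ⟨0, h0A⟩ hbdd
    rcases eq_or_lt_of_le hmA.1.2 with he | hlt
    · rw [← he]; exact hmA.2
    · exfalso
      set y := x + m • c with hy
      have hyΩ : y ∈ Ω := hseg m hmA.1
      have hyne : ¬(v₁ y = 0 ∧ v₂ y = 0) := by rw [hmA.2.1, hmA.2.2]; exact hc0
      obtain ⟨ε, hε, hloc⟩ := key_local hv₁ hv₂ hΩo heq hyΩ hyne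
      have hcy : ((v₁ y, v₂ y) : ℝ × ℝ) = c := by rw [hmA.2.1, hmA.2.2]
      set u := min (m + ε / 2) t with hu
      have hu1 : m < u := lt_min (by linarith) hlt
      have huI : u ∈ Icc 0 t := ⟨le_trans hmA.1.1 hu1.le, min_le_right _ _⟩
      have habs : |u - m| < ε := by
        rw [abs_of_pos (by linarith)]
        have : u ≤ m + ε / 2 := min_le_left _ _
        linarith
      have hval := hloc (u - m) habs
      rw [hcy] at hval
      have hpt : y + (u - m) • c = x + u • c := by
        rw [hy, add_assoc, ← add_smul]
        congr 2
        ring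
      rw [hpt] at hval
      have huA : u ∈ A := ⟨huI, by rw [hval.1, hval.2]; exact ⟨hmA.2.1, hmA.2.2⟩⟩
      exact absurd (le_csSup hbdd huA) (not_le.2 hu1)

lemma eqcond_neg {v₁ v₂ : ℝ × ℝ → ℝ} {Ω : Set (ℝ × ℝ)} (heq : EqCond v₁ v₂ Ω) :
    EqCond (fun z => -v₁ z) (fun z => -v₂ z) Ω := by
  intro z hz
  obtain ⟨⟨e1, e2⟩, e3⟩ := heq z hz
  have p1 : ∀ f : ℝ × ℝ → ℝ, pd₁ (fun z => -f z) z = -pd₁ f z := by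
    intro f; simp only [pd₁, fderiv_neg]; simp
  have p2 : ∀ f : ℝ × ℝ → ℝ, pd₂ (fun z => -f z) z = -pd₂ f z := by
    intro f; simp only [pd₂, fderiv_neg]; simp
  rw [p1 v₁, p1 v₂, p2 v₁, p2 v₂]
  refine ⟨⟨by linear_combination e1, by linear_combination e2⟩, by linear_combination -e3⟩

lemma seg_all {v₁ v₂ : ℝ × ℝ → ℝ} {Ω : Set (ℝ × ℝ)}
    (hv₁ : ContDiff ℝ 1 v₁) (hv₂ : ContDiff ℝ 1 v₂) (hΩo : IsOpen Ω)
    (heq : EqCond v₁ v₂ Ω) {x : ℝ × ℝ} (hx : x ∈ Ω) (t : ℝ)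
    (hseg : ∀ s ∈ uIcc 0 t, x + s • ((v₁ x, v₂ x) : ℝ × ℝ) ∈ Ω) :
    v₁ (x + t • ((v₁ x, v₂ x) : ℝ × ℝ)) = v₁ x ∧
    v₂ (x + t • ((v₁ x, v₂ x) : ℝ × ℝ)) = v₂ x := by
  rcases le_or_gt 0 t with h | h
  · refine seg_pos hv₁ hv₂ hΩo heq hx h fun s hs => hseg s ?_
    rwa [uIcc_of_le h]
  · have hneg : ((-v₁ x, -v₂ x) : ℝ × ℝ) = -((v₁ x, v₂ x) : ℝ × ℝ) := by
      simp [Prod.ext_iff]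
    have hseg' : ∀ s ∈ Icc 0 (-t),
        x + s • (((fun z => -v₁ z) x, (fun z => -v₂ z) x) : ℝ × ℝ) ∈ Ω := by
      intro s hs
      have : x + s • ((-v₁ x, -v₂ x) : ℝ × ℝ) = x + (-s) • ((v₁ x, v₂ x) : ℝ × ℝ) := by
        rw [hneg, smul_neg, ← neg_smul]
      simp only []
      rw [this]
      apply hseg
      rw [uIcc_of_ge h.le]
      exact ⟨by linarith [hs.2], by linarith [hs.1]⟩
    have := seg_pos (hv₁.neg) (hv₂.neg) hΩo (eqcond_neg heq) hx
      (t := -t) (by linarith) hseg'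
    rw [hneg, smul_neg, ← neg_smul, neg_neg] at this
    exact ⟨by linarith [this.1], by linarith [this.2]⟩

lemma reach {v₁ v₂ : ℝ × ℝ → ℝ} {Ω : Set (ℝ × ℝ)}
    (hv₁ : ContDiff ℝ 1 v₁) (hv₂ : ContDiff ℝ 1 v₂) (hΩo : IsOpen Ω)
    (heq : EqCond v₁ v₂ Ω) {x : ℝ × ℝ} (hx : x ∈ Ω) {T : ℝ} (hT : T ≠ 0)
    (hseg : ∀ s ∈ uIcc 0 T, s ≠ T → x + s • ((v₁ x, v₂ x) : ℝ × ℝ) ∈ Ω) :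
    v₁ (x + T • ((v₁ x, v₂ x) : ℝ × ℝ)) = v₁ x ∧
    v₂ (x + T • ((v₁ x, v₂ x) : ℝ × ℝ)) = v₂ x := by
  set c : ℝ × ℝ := (v₁ x, v₂ x) with hc
  set S : Set ℝ := uIcc 0 T \ {T} with hS
  have hsub : ∀ s ∈ S, uIcc (0 : ℝ) s ⊆ S := by
    intro s hs u hu
    obtain ⟨hs1, hs2⟩ := hs
    simp only [hS, mem_diff, mem_singleton_iff]
    rcases le_or_gt 0 T with h | h
    · rw [uIcc_of_le h] at hs1 ⊢
      have hs0 : 0 ≤ s := hs1.1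
      rw [uIcc_of_le hs0] at hu
      have hsT : s < T := lt_of_le_of_ne hs1.2 hs2
      exact ⟨⟨hu.1, le_trans hu.2 hs1.2⟩, by intro hh; rw [hh] at hu; linarith [hu.2]⟩
    · rw [uIcc_of_ge h.le] at hs1 ⊢
      have hs0 : s ≤ 0 := hs1.2
      rw [uIcc_of_ge hs0] at hu
      have hsT : T < s := lt_of_le_of_ne hs1.1 (Ne.symm hs2)
      exact ⟨⟨le_trans hs1.1 hu.1, hu.2⟩, by intro hh; rw [hh] at hu; linarith [hu.1]⟩
  have hval : ∀ s ∈ S, v₁ (x + s • c) = v₁ x ∧ v₂ (x + s • c) = v₂ x := by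
    intro s hs
    exact seg_all hv₁ hv₂ hΩo heq hx s fun u hu =>
      hseg u ((hsub s hs hu).1) ((hsub s hs hu).2)
  have hcont : Continuous fun u : ℝ => x + u • c :=
    continuous_const.add (continuous_id.smul continuous_const)
  have hTcl : T ∈ closure S := by
    rcases lt_or_gt_of_ne hT with h | h
    · -- T < 0 : S ⊇ Ioc T 0
      have h1 : Ioc T 0 ⊆ S := by
        intro u hu
        constructor
        · rw [uIcc_of_ge h.le]; exact ⟨hu.1.le, hu.2⟩
        · simp only [mem_singleton_iff]; intro hh; rw [hh] at hu; exact lt_irrefl T hu.1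
      refine closure_mono h1 ?_
      rw [closure_Ioc (ne_of_lt h)]
      exact ⟨le_refl T, h.le⟩
    · have h1 : Ico 0 T ⊆ S := by
        intro u hu
        constructor
        · rw [uIcc_of_le h.le]; exact ⟨hu.1, hu.2.le⟩
        · simp only [mem_singleton_iff]; intro hh; rw [hh] at hu; exact lt_irrefl T hu.2
      refine closure_mono h1 ?_
      rw [closure_Ico h.ne]
      exact ⟨h.le, le_refl T⟩
  constructor
  · have hEq : EqOn (fun u : ℝ => v₁ (x + u • c)) (fun _ => v₁ x) S := fun s hs => (hval s hs).1
    exact hEq.closure (hv₁.continuous.comp hcont) continuous_const hTcl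
  · have hEq : EqOn (fun u : ℝ => v₂ (x + u • c)) (fun _ => v₂ x) S := fun s hs => (hval s hs).2
    exact hEq.closure (hv₂.continuous.comp hcont) continuous_const hTcl

lemma closure_snd_preimage (I : Set ℝ) (J : Set ℝ) (hIo : IsOpen I) (hJc : IsClosed J)
    (hIJ : I ⊆ J)
    (hJI : ∀ y ∈ J, ∃ m : ℝ, ∀ t : ℝ, t ∈ Ioo (0:ℝ) 1 → (1 - t) * y + t * m ∈ I) :
    closure {x : ℝ × ℝ | x.2 ∈ I} = {x : ℝ × ℝ | x.2 ∈ J} := by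
  apply subset_antisymm
  · exact closure_minimal (fun x hx => hIJ hx) (hJc.preimage continuous_snd)
  · intro x hx
    obtain ⟨m, hm⟩ := hJI x.2 hx
    have htend : Tendsto (fun t : ℝ => ((x.1, (1 - t) * x.2 + t * m) : ℝ × ℝ))
        (nhdsWithin 0 (Ioi 0)) (nhds x) := by
      have hcont : Continuous fun t : ℝ => ((x.1, (1 - t) * x.2 + t * m) : ℝ × ℝ) := by
        apply continuous_const.prodMk
        continuity
      have h0 : ((x.1, (1 - (0:ℝ)) * x.2 + (0:ℝ) * m) : ℝ × ℝ) = x := by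
        simp
      have := hcont.tendsto 0
      rw [h0] at this
      exact this.mono_left nhdsWithin_le_nhds
    refine mem_closure_of_tendsto htend ?_
    filter_upwards [Ioo_mem_nhdsGT_of_mem (left_mem_Ico.2 one_pos)] with t ht
    exact hm t ht

lemma frontier_snd_preimage (I : Set ℝ) (hIo : IsOpen I) :
    frontier {x : ℝ × ℝ | x.2 ∈ I} = closure {x : ℝ × ℝ | x.2 ∈ I} \ {x : ℝ × ℝ | x.2 ∈ I} :=
  (hIo.preimage continuous_snd).frontier_eq

lemma v2_zero_gen {v₁ v₂ : ℝ × ℝ → ℝ} {Ω : Set (ℝ × ℝ)}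
    (hv₁ : ContDiff ℝ 1 v₁) (hv₂ : ContDiff ℝ 1 v₂) (hΩo : IsOpen Ω)
    (heq : EqCond v₁ v₂ Ω) (hbc : ∀ x ∈ frontier Ω, v₂ x = 0)
    (hreach : ∀ x ∈ Ω, v₂ x ≠ 0 → ∃ T : ℝ, T ≠ 0 ∧
      (∀ s ∈ uIcc 0 T, s ≠ T → x + s • ((v₁ x, v₂ x) : ℝ × ℝ) ∈ Ω) ∧
      x + T • ((v₁ x, v₂ x) : ℝ × ℝ) ∈ frontier Ω) :
    ∀ x ∈ Ω, v₂ x = 0 := by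
  intro x hx
  by_contra hne
  obtain ⟨T, hT, hseg, hfr⟩ := hreach x hx hne
  have := (reach hv₁ hv₂ hΩo heq hx hT hseg).2
  rw [hbc _ hfr] at this
  exact hne this.symm

lemma horiz_case {v₁ v₂ : ℝ × ℝ → ℝ} {Ω : Set (ℝ × ℝ)}
    (hv₁ : ContDiff ℝ 1 v₁) (hv₂ : ContDiff ℝ 1 v₂) (hΩo : IsOpen Ω)
    (heq : EqCond v₁ v₂ Ω)
    (hhor : ∀ x ∈ Ω, ∀ u : ℝ, ((u, x.2) : ℝ × ℝ) ∈ Ω)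
    (hv20 : ∀ x ∈ Ω, v₂ x = 0) :
    ∀ x ∈ closure Ω, v₁ x = v₁ (0, x.2) ∧ v₂ x = 0 := by
  have hd₁ : Differentiable ℝ v₁ := hv₁.differentiable one_ne_zero
  have hpd : ∀ z ∈ Ω, fderiv ℝ v₁ z ((1 : ℝ), (0 : ℝ)) = 0 := by
    intro z hz
    have hev : v₂ =ᶠ[nhds z] fun _ => (0 : ℝ) :=
      Filter.eventuallyEq_of_mem (hΩo.mem_nhds hz) fun w hw => hv20 w hw
    have h2 : fderiv ℝ v₂ z = 0 := by rw [hev.fderiv_eq]; exact fderiv_const_apply 0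
    have hdiv := (heq z hz).2
    simp only [pd₁, pd₂, h2] at hdiv
    simpa using hdiv
  have hconst : ∀ x ∈ Ω, v₁ x = v₁ (0, x.2) := by
    intro x hx
    have hψ : ∀ u : ℝ, HasDerivAt (fun u : ℝ => v₁ (u, x.2)) 0 u := by
      intro u
      have hι : HasDerivAt (fun u : ℝ => ((u, x.2) : ℝ × ℝ)) ((1 : ℝ), (0 : ℝ)) u :=
        (hasDerivAt_id u).prodMk (hasDerivAt_const u x.2)
      have := (hd₁ ((u, x.2) : ℝ × ℝ)).hasFDerivAt.comp_hasDerivAt u hι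
      rw [hpd _ (hhor x hx u)] at this
      exact this
    have hcst := is_const_of_deriv_eq_zero (f := fun u : ℝ => v₁ (u, x.2))
      (fun u => (hψ u).differentiableAt) (fun u => (hψ u).deriv) x.1 0
    simpa using hcst
  have hcontG : Continuous fun z : ℝ × ℝ => v₁ (0, z.2) :=
    hv₁.continuous.comp (continuous_const.prodMk continuous_snd)
  intro x hx
  constructor
  · exact (Set.EqOn.closure hconst hv₁.continuous hcontG) hx
  · exact (Set.EqOn.closure (fun z hz => hv20 z hz) hv₂.continuous continuous_const) hx

lemma plane_parallel {v₁ v₂ : ℝ × ℝ → ℝ}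
    (hv₁ : ContDiff ℝ 1 v₁) (hv₂ : ContDiff ℝ 1 v₂)
    (heq : EqCond v₁ v₂ univ) :
    ∀ x z : ℝ × ℝ, v₁ x * v₂ z - v₂ x * v₁ z = 0 := by
  intro x z
  by_contra hcr
  set Δ : ℝ := v₁ x * v₂ z - v₂ x * v₁ z with hΔ
  have hΔne : Δ ≠ 0 := hcr
  set s : ℝ := ((z.1 - x.1) * v₂ z - v₁ z * (z.2 - x.2)) / Δ with hs
  set t : ℝ := (v₂ x * (z.1 - x.1) - v₁ x * (z.2 - x.2)) / Δ with ht
  have hpt : x + s • ((v₁ x, v₂ x) : ℝ × ℝ) = z + t • ((v₁ z, v₂ z) : ℝ × ℝ) := by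
    have h1 : x.1 + s * v₁ x = z.1 + t * v₁ z := by
      rw [hs, ht]
      field_simp
      ring
    have h2 : x.2 + s * v₂ x = z.2 + t * v₂ z := by
      rw [hs, ht]
      field_simp
      ring
    ext
    · simpa using h1
    · simpa using h2
  have hx := seg_all hv₁ hv₂ isOpen_univ heq (mem_univ x) s fun u _ => mem_univ _
  have hz := seg_all hv₁ hv₂ isOpen_univ heq (mem_univ z) t fun u _ => mem_univ _
  rw [hpt] at hx
  have e1 : v₁ x = v₁ z := by rw [← hx.1, hz.1]
  have e2 : v₂ x = v₂ z := by rw [← hx.2, hz.2]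
  apply hΔne
  rw [hΔ, e1, e2]
  ring

lemma plane_shear {v₁ v₂ : ℝ × ℝ → ℝ}
    (hv₁ : ContDiff ℝ 1 v₁) (hv₂ : ContDiff ℝ 1 v₂)
    (heq : EqCond v₁ v₂ univ) :
    ∃ e : ℝ × ℝ, e.1 ^ 2 + e.2 ^ 2 = 1 ∧ ∃ w : ℝ → ℝ,
      ∀ x : ℝ × ℝ, v₁ x = w (-e.2 * x.1 + e.1 * x.2) * e.1 ∧
                   v₂ x = w (-e.2 * x.1 + e.1 * x.2) * e.2 := by
  by_cases hzero : ∀ x : ℝ × ℝ, v₁ x = 0 ∧ v₂ x = 0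
  · exact ⟨(1, 0), by norm_num, fun _ => 0, fun x => by
      simp [(hzero x).1, (hzero x).2]⟩
  push_neg at hzero
  obtain ⟨x₀, hx₀⟩ := hzero
  have hx₀' : ¬(v₁ x₀ = 0 ∧ v₂ x₀ = 0) := fun h => hx₀ h.1 h.2
  have hn2pos : 0 < v₁ x₀ ^ 2 + v₂ x₀ ^ 2 := by
    rcases not_and_or.1 hx₀' with h | h
    · have : 0 < v₁ x₀ ^ 2 := by positivity
      nlinarith [sq_nonneg (v₂ x₀)]
    · have : 0 < v₂ x₀ ^ 2 := by positivity
      nlinarith [sq_nonneg (v₁ x₀)]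
  set n : ℝ := Real.sqrt (v₁ x₀ ^ 2 + v₂ x₀ ^ 2) with hn
  have hnpos : 0 < n := Real.sqrt_pos.2 hn2pos
  have hnne : n ≠ 0 := ne_of_gt hnpos
  have hn2 : n ^ 2 = v₁ x₀ ^ 2 + v₂ x₀ ^ 2 := Real.sq_sqrt hn2pos.le
  set e : ℝ × ℝ := (v₁ x₀ / n, v₂ x₀ / n) with he
  have hunit : e.1 ^ 2 + e.2 ^ 2 = 1 := by
    rw [he]
    simp only []
    rw [div_pow, div_pow, ← add_div, ← hn2, div_self (by positivity)]
  have hpar := plane_parallel hv₁ hv₂ heq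
  set h : ℝ × ℝ → ℝ := fun x => v₁ x * e.1 + v₂ x * e.2 with hh
  have hrep : ∀ x : ℝ × ℝ, v₁ x = h x * e.1 ∧ v₂ x = h x * e.2 := by
    intro x
    have hp := hpar x x₀
    constructor
    · rw [hh, he]
      simp only []
      field_simp
      linear_combination v₁ x * hn2 + v₂ x₀ * hp
    · rw [hh, he]
      simp only []
      field_simp
      linear_combination v₂ x * hn2 - v₁ x₀ * hp
  have hinv1 : ∀ x : ℝ × ℝ, ∀ t : ℝ, h x ≠ 0 → h (x + t • e) = h x := by
    intro x t hx0
    have hce : ((v₁ x, v₂ x) : ℝ × ℝ) = h x • e := by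
      ext
      · simpa using (hrep x).1
      · simpa using (hrep x).2
    have := seg_all hv₁ hv₂ isOpen_univ heq (mem_univ x) (t / h x) fun u _ => mem_univ _
    rw [hce, smul_smul, div_mul_cancel₀ _ hx0] at this
    rw [hh]
    simp only []
    rw [this.1, this.2]
  have hinv : ∀ x : ℝ × ℝ, ∀ t : ℝ, h (x + t • e) = h x := by
    intro x t
    by_cases hx0 : h x = 0
    · by_cases hy0 : h (x + t • e) = 0
      · rw [hy0, hx0]
      · have := hinv1 (x + t • e) (-t) hy0
        rw [add_assoc, ← add_smul, add_neg_cancel, zero_smul, add_zero] at this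
        rw [this] at hx0
        exact absurd hx0 hy0
    · exact hinv1 x t hx0
  refine ⟨e, hunit, fun s => h (s • ((-e.2, e.1) : ℝ × ℝ)), fun x => ?_⟩
  have hdecomp : x = (-e.2 * x.1 + e.1 * x.2) • ((-e.2, e.1) : ℝ × ℝ)
      + (e.1 * x.1 + e.2 * x.2) • e := by
    have h1 : e.1 ^ 2 + e.2 ^ 2 = 1 := hunit
    ext
    · simp only [Prod.fst_add, Prod.smul_fst, smul_eq_mul]
      linear_combination (-x.1) * h1
    · simp only [Prod.snd_add, Prod.smul_snd, smul_eq_mul]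
      linear_combination (-x.2) * h1
  have hval : h x = h ((-e.2 * x.1 + e.1 * x.2) • ((-e.2, e.1) : ℝ × ℝ)) := by
    conv_lhs => rw [hdecomp]
    exact hinv _ _
  rw [(hrep x).1, (hrep x).2, hval]
  exact ⟨rfl, rfl⟩

lemma seg_arith_neg {c₂ T s : ℝ} (hc : c₂ ≠ 0) (hs : s ∈ uIcc 0 T) (hne : s ≠ T)
    (hTneg : T * c₂ < 0) : T * c₂ < s * c₂ ∧ s * c₂ ≤ 0 := by
  rcases lt_or_gt_of_ne hc with h | h
  · have hT0 : 0 < T := by nlinarith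
    rw [uIcc_of_le hT0.le] at hs
    have hsT : s < T := lt_of_le_of_ne hs.2 hne
    exact ⟨by nlinarith, by nlinarith [hs.1]⟩
  · have hT0 : T < 0 := by nlinarith
    rw [uIcc_of_ge hT0.le] at hs
    have hsT : T < s := lt_of_le_of_ne hs.1 (Ne.symm hne)
    exact ⟨by nlinarith, by nlinarith [hs.2]⟩

lemma seg_arith_pos {c₂ T s : ℝ} (hc : c₂ ≠ 0) (hs : s ∈ uIcc 0 T) (hne : s ≠ T)
    (hTpos : 0 < T * c₂) : s * c₂ < T * c₂ ∧ 0 ≤ s * c₂ := by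
  have h := seg_arith_neg (c₂ := -c₂) (T := T) (s := s) (neg_ne_zero.2 hc) hs hne (by nlinarith)
  constructor <;> nlinarith [h.1, h.2]

lemma snd_line (x : ℝ × ℝ) (s : ℝ) (c : ℝ × ℝ) : (x + s • c).2 = x.2 + s * c.2 := by
  simp

lemma closure_Ioi_set (a : ℝ) :
    closure {x : ℝ × ℝ | a < x.2} = {x : ℝ × ℝ | a ≤ x.2} := by
  have := closure_snd_preimage (Ioi a) (Ici a) isOpen_Ioi isClosed_Ici
    (fun y hy => mem_Ici.2 (le_of_lt (mem_Ioi.1 hy)))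
    (fun y hy => ⟨y + 1, fun t ht => by simp only [mem_Ioi]; nlinarith [mem_Ici.1 hy, ht.1, ht.2]⟩)
  exact this

lemma closure_Iio_set (b : ℝ) :
    closure {x : ℝ × ℝ | x.2 < b} = {x : ℝ × ℝ | x.2 ≤ b} := by
  have := closure_snd_preimage (Iio b) (Iic b) isOpen_Iio isClosed_Iic
    (fun y hy => mem_Iic.2 (le_of_lt (mem_Iio.1 hy)))
    (fun y hy => ⟨y - 1, fun t ht => by simp only [mem_Iio]; nlinarith [mem_Iic.1 hy, ht.1, ht.2]⟩)
  exact this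

lemma closure_Ioo_set (a b : ℝ) (hab : a < b) :
    closure {x : ℝ × ℝ | a < x.2 ∧ x.2 < b} = {x : ℝ × ℝ | a ≤ x.2 ∧ x.2 ≤ b} := by
  have := closure_snd_preimage (Ioo a b) (Icc a b) isOpen_Ioo isClosed_Icc
    (fun y hy => mem_Icc.2 ⟨le_of_lt (mem_Ioo.1 hy).1, le_of_lt (mem_Ioo.1 hy).2⟩)
    (fun y hy => ⟨(a + b) / 2, fun t ht => by
      constructor
      · nlinarith [hy.1, hy.2, ht.1, ht.2]
      · nlinarith [hy.1, hy.2, ht.1, ht.2]⟩)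
  exact this

lemma assemble {v₁ v₂ : ℝ × ℝ → ℝ} {Ω : Set (ℝ × ℝ)}
    (hv₁ : ContDiff ℝ 1 v₁) (hv₂ : ContDiff ℝ 1 v₂) (hΩo : IsOpen Ω)
    (heq : EqCond v₁ v₂ Ω)
    (hhor : ∀ x ∈ Ω, ∀ u : ℝ, ((u, x.2) : ℝ × ℝ) ∈ Ω)
    (hv20 : ∀ x ∈ Ω, v₂ x = 0) :
    (∃ e : ℝ × ℝ, e.1 ^ 2 + e.2 ^ 2 = 1 ∧ ∃ w : ℝ → ℝ,
        ∀ x ∈ closure Ω, v₁ x = w (-e.2 * x.1 + e.1 * x.2) * e.1 ∧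
                         v₂ x = w (-e.2 * x.1 + e.1 * x.2) * e.2) ∧
    (Ω ≠ univ → ∃ w : ℝ → ℝ, ∀ x ∈ closure Ω, v₁ x = w x.2 ∧ v₂ x = 0) := by
  have hmain := horiz_case hv₁ hv₂ hΩo heq hhor hv20
  constructor
  · refine ⟨(1, 0), by norm_num, fun s => v₁ (0, s), fun x hx => ?_⟩
    obtain ⟨h1, h2⟩ := hmain x hx
    constructor
    · simpa using h1
    · simpa using h2
  · intro _
    exact ⟨fun s => v₁ (0, s), fun x hx => hmain x hx⟩

/-- an incompressible flow with vanishing total-curvature field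
(`v₁∇v₂ − v₂∇v₁ = 0`) in the plane, a half-plane, or a strip, with the slip
boundary condition on finite horizontal boundary lines, is a shear flow. -/
theorem statement12
    (Ω : Set (ℝ × ℝ))
    (hΩ : Ω = univ ∨ (∃ a : ℝ, Ω = {x : ℝ × ℝ | a < x.2}) ∨
          (∃ b : ℝ, Ω = {x : ℝ × ℝ | x.2 < b}) ∨
          (∃ a b : ℝ, a < b ∧ Ω = {x : ℝ × ℝ | a < x.2 ∧ x.2 < b}))
    (v₁ v₂ : ℝ × ℝ → ℝ) (hv₁ : ContDiff ℝ 1 v₁) (hv₂ : ContDiff ℝ 1 v₂)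
    (heq : ∀ x ∈ Ω,
      (v₁ x * pd₁ v₂ x - v₂ x * pd₁ v₁ x = 0 ∧
       v₁ x * pd₂ v₂ x - v₂ x * pd₂ v₁ x = 0) ∧
      pd₁ v₁ x + pd₂ v₂ x = 0)
    (hbc : ∀ x ∈ frontier Ω, v₂ x = 0) :
    (∃ e : ℝ × ℝ, e.1 ^ 2 + e.2 ^ 2 = 1 ∧ ∃ w : ℝ → ℝ,
        ∀ x ∈ closure Ω, v₁ x = w (-e.2 * x.1 + e.1 * x.2) * e.1 ∧
                         v₂ x = w (-e.2 * x.1 + e.1 * x.2) * e.2) ∧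
    (Ω ≠ univ → ∃ w : ℝ → ℝ, ∀ x ∈ closure Ω, v₁ x = w x.2 ∧ v₂ x = 0) := by
  rcases hΩ with rfl | ⟨a, rfl⟩ | ⟨b, rfl⟩ | ⟨a, b, hab, rfl⟩
  · obtain ⟨e, he, w, hw⟩ := plane_shear hv₁ hv₂ heq
    exact ⟨⟨e, he, w, fun x _ => hw x⟩, fun hne => absurd rfl hne⟩
  · -- upper half-plane
    have hΩo : IsOpen {x : ℝ × ℝ | a < x.2} := isOpen_lt continuous_const continuous_snd
    have hcl := closure_Ioi_set a
    have hv20 : ∀ x ∈ {x : ℝ × ℝ | a < x.2}, v₂ x = 0 := by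
      apply v2_zero_gen hv₁ hv₂ hΩo heq hbc
      intro x hx hv2
      have hxa : a < x.2 := hx
      have hy2 : (x + ((a - x.2) / v₂ x) • ((v₁ x, v₂ x) : ℝ × ℝ)).2 = a := by
        rw [snd_line]
        show x.2 + (a - x.2) / v₂ x * v₂ x = a
        rw [div_mul_cancel₀ _ hv2]; ring
      refine ⟨(a - x.2) / v₂ x, div_ne_zero (by linarith) hv2, ?_, ?_⟩
      · intro s hs hsne
        have hTc : ((a - x.2) / v₂ x) * v₂ x = a - x.2 := div_mul_cancel₀ _ hv2
        have harith := seg_arith_neg hv2 hs hsne (by rw [hTc]; linarith)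
        rw [hTc] at harith
        show a < (x + s • ((v₁ x, v₂ x) : ℝ × ℝ)).2
        rw [snd_line]
        have h2 : ((v₁ x, v₂ x) : ℝ × ℝ).2 = v₂ x := rfl
        rw [h2]
        linarith [harith.1]
      · rw [hΩo.frontier_eq]
        refine ⟨?_, ?_⟩
        · rw [hcl]
          show a ≤ _
          rw [hy2]
        · intro hmem
          have : a < (x + ((a - x.2) / v₂ x) • ((v₁ x, v₂ x) : ℝ × ℝ)).2 := hmem
          rw [hy2] at this
          exact lt_irrefl a this
    exact assemble hv₁ hv₂ hΩo heq (fun x hx u => hx) hv20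
  · -- lower half-plane
    have hΩo : IsOpen {x : ℝ × ℝ | x.2 < b} := isOpen_lt continuous_snd continuous_const
    have hcl := closure_Iio_set b
    have hv20 : ∀ x ∈ {x : ℝ × ℝ | x.2 < b}, v₂ x = 0 := by
      apply v2_zero_gen hv₁ hv₂ hΩo heq hbc
      intro x hx hv2
      have hxb : x.2 < b := hx
      have hy2 : (x + ((b - x.2) / v₂ x) • ((v₁ x, v₂ x) : ℝ × ℝ)).2 = b := by
        rw [snd_line]
        show x.2 + (b - x.2) / v₂ x * v₂ x = b
        rw [div_mul_cancel₀ _ hv2]; ring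
      refine ⟨(b - x.2) / v₂ x, div_ne_zero (by linarith) hv2, ?_, ?_⟩
      · intro s hs hsne
        have hTc : ((b - x.2) / v₂ x) * v₂ x = b - x.2 := div_mul_cancel₀ _ hv2
        have harith := seg_arith_pos hv2 hs hsne (by rw [hTc]; linarith)
        rw [hTc] at harith
        show (x + s • ((v₁ x, v₂ x) : ℝ × ℝ)).2 < b
        rw [snd_line]
        have h2 : ((v₁ x, v₂ x) : ℝ × ℝ).2 = v₂ x := rfl
        rw [h2]
        linarith [harith.1]
      · rw [hΩo.frontier_eq]
        refine ⟨?_, ?_⟩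
        · rw [hcl]
          show _ ≤ b
          rw [hy2]
        · intro hmem
          have : (x + ((b - x.2) / v₂ x) • ((v₁ x, v₂ x) : ℝ × ℝ)).2 < b := hmem
          rw [hy2] at this
          exact lt_irrefl b this
    exact assemble hv₁ hv₂ hΩo heq (fun x hx u => hx) hv20
  · -- strip
    have hΩo : IsOpen {x : ℝ × ℝ | a < x.2 ∧ x.2 < b} :=
      (isOpen_lt continuous_const continuous_snd).inter
        (isOpen_lt continuous_snd continuous_const)
    have hcl := closure_Ioo_set a b hab
    have hv20 : ∀ x ∈ {x : ℝ × ℝ | a < x.2 ∧ x.2 < b}, v₂ x = 0 := by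
      apply v2_zero_gen hv₁ hv₂ hΩo heq hbc
      intro x hx hv2
      obtain ⟨hxa, hxb⟩ := hx
      have hy2 : (x + ((a - x.2) / v₂ x) • ((v₁ x, v₂ x) : ℝ × ℝ)).2 = a := by
        rw [snd_line]
        show x.2 + (a - x.2) / v₂ x * v₂ x = a
        rw [div_mul_cancel₀ _ hv2]; ring
      refine ⟨(a - x.2) / v₂ x, div_ne_zero (by linarith) hv2, ?_, ?_⟩
      · intro s hs hsne
        have hTc : ((a - x.2) / v₂ x) * v₂ x = a - x.2 := div_mul_cancel₀ _ hv2
        have harith := seg_arith_neg hv2 hs hsne (by rw [hTc]; linarith)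
        rw [hTc] at harith
        refine ⟨?_, ?_⟩
        · show a < (x + s • ((v₁ x, v₂ x) : ℝ × ℝ)).2
          rw [snd_line]
          have h2 : ((v₁ x, v₂ x) : ℝ × ℝ).2 = v₂ x := rfl
          rw [h2]
          linarith [harith.1]
        · show (x + s • ((v₁ x, v₂ x) : ℝ × ℝ)).2 < b
          rw [snd_line]
          have h2 : ((v₁ x, v₂ x) : ℝ × ℝ).2 = v₂ x := rfl
          rw [h2]
          linarith [harith.2]
      · rw [hΩo.frontier_eq]
        refine ⟨?_, ?_⟩
        · rw [hcl]
          refine ⟨?_, ?_⟩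
          · show a ≤ _
            rw [hy2]
          · show _ ≤ b
            rw [hy2]; linarith
        · intro hmem
          have : a < (x + ((a - x.2) / v₂ x) • ((v₁ x, v₂ x) : ℝ × ℝ)).2 := hmem.1
          rw [hy2] at this
          exact lt_irrefl a this
    exact assemble hv₁ hv₂ hΩo heq (fun x hx u => ⟨hx.1, hx.2⟩) hv20
end
end

section
/- Let Ω∞ = ℝ×(−1,1) and let v = (v₁,v₂) be C¹ and P be C¹ on the closed strip ℝ×[−1,1] such that (v,P) solves the steady incompressible Euler system in Ω∞, v satisfies the slip boundary condition v₂(x₁,1) = v₂(x₁,−1) = 0 for all x₁ ∈ ℝ, there is a constant C > 0 such that sup_{[−R,R]×[−1,1]} |v| ≤ C·√R for every R > 100, and the total curvature is finite: ∫_{Ω∞} |v₁∇v₂ − v₂∇v₁|² / |v|² dx < ∞. For R > 100 let φ_R : ℝ → ℝ be the cutoff φ_R(t) = min(1, max(0, 2 − |t|/R)). Then the boundary flux tends to zero: lim_{R→∞} [ ∫_ℝ φ_R(x₁)·(v₁ ∂ₓ₂v₂)(x₁,1) dx₁ − ∫_ℝ φ_R(x₁)·(v₁ ∂ₓ₂v₂)(x₁,−1)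 dx₁ ] = 0. -/
open Real Set MeasureTheory Filter

noncomputable section

/-! ### Auxiliary lemmas -/

section Aux

open scoped ENNReal
open intervalIntegral

lemma cont_pd₁ {f : ℝ × ℝ → ℝ} (hf : ContDiff ℝ 1 f) : Continuous (pd₁ f) :=
  (hf.continuous_fderiv one_ne_zero).clm_apply continuous_const

lemma cont_pd₂ {f : ℝ × ℝ → ℝ} (hf : ContDiff ℝ 1 f) : Continuous (pd₂ f) :=
  (hf.continuous_fderiv one_ne_zero).clm_apply continuous_const

lemma hasDerivAt_line1 {f : ℝ × ℝ → ℝ} (hf : ContDiff ℝ 1 f) (a t : ℝ) :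
    HasDerivAt (fun t => f (t, a)) (pd₁ f (t, a)) t := by
  have h1 : HasDerivAt (fun t : ℝ => (t, a)) ((1:ℝ), (0:ℝ)) t := by
    simpa using (hasDerivAt_id t).prodMk (hasDerivAt_const t a)
  exact ((hf.differentiable one_ne_zero (t, a)).hasFDerivAt).comp_hasDerivAt t h1

lemma hasDerivAt_line2 {f : ℝ × ℝ → ℝ} (hf : ContDiff ℝ 1 f) (t s : ℝ) :
    HasDerivAt (fun s => f (t, s)) (pd₂ f (t, s)) s := by
  have h1 : HasDerivAt (fun s : ℝ => (t, s)) ((0:ℝ), (1:ℝ)) s := by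
    simpa using (hasDerivAt_const s t).prodMk (hasDerivAt_id s)
  exact ((hf.differentiable one_ne_zero (t, s)).hasFDerivAt).comp_hasDerivAt s h1

lemma ext_zero {h : ℝ × ℝ → ℝ} (hc : Continuous h) (h0 : ∀ x ∈ strip, h x = 0)
    {c : ℝ} (hc1 : -1 ≤ c) (hc2 : c ≤ 1) (t : ℝ) : h (t, c) = 0 := by
  have key : EqOn (fun s => h (t, s)) (fun _ => (0:ℝ)) (closure (Ioo (-1:ℝ) 1)) :=
    EqOn.closure (fun s hs => h0 (t, s) ⟨hs.1, hs.2⟩)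
      (hc.comp (continuous_const.prodMk continuous_id)) continuous_const
  simpa using key (by rw [closure_Ioo (by norm_num)]; exact ⟨hc1, hc2⟩ : c ∈ closure (Ioo (-1:ℝ) 1))

section main
variable {v₁ v₂ P : ℝ × ℝ → ℝ}
  (hv₁ : ContDiff ℝ 1 v₁) (hv₂ : ContDiff ℝ 1 v₂) (hP : ContDiff ℝ 1 P)
  (hEuler : EulerOn v₁ v₂ P strip)

include hv₁ hv₂ hP hEuler in
lemma boundary_id {c : ℝ} (hc1 : -1 ≤ c) (hc2 : c ≤ 1) (hs : ∀ t, v₂ (t, c) = 0) (t : ℝ) :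
    v₁ (t, c) * pd₂ v₂ (t, c) = pd₁ P (t, c) := by
  have hpd1v₂ : pd₁ v₂ (t, c) = 0 := by
    have h1 := hasDerivAt_line1 hv₂ c t
    have h2 : HasDerivAt (fun t : ℝ => v₂ (t, c)) 0 t := by
      have : (fun t : ℝ => v₂ (t, c)) = fun _ => (0:ℝ) := funext fun t => hs t
      rw [this]; exact hasDerivAt_const t 0
    exact h1.unique h2
  have hdiv : pd₁ v₁ (t, c) + pd₂ v₂ (t, c) = 0 :=
    ext_zero (((cont_pd₁ hv₁).add (cont_pd₂ hv₂))) (fun x hx => (hEuler x hx).2.2) hc1 hc2 t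
  have heq1 : v₁ (t, c) * pd₁ v₁ (t, c) + v₂ (t, c) * pd₂ v₁ (t, c) + pd₁ P (t, c) = 0 := by
    refine ext_zero ?_ (fun x hx => (hEuler x hx).1) hc1 hc2 t
    exact ((hv₁.continuous.mul (cont_pd₁ hv₁)).add (hv₂.continuous.mul (cont_pd₂ hv₁))).add
      (cont_pd₁ hP)
  have hv2c : v₂ (t, c) = 0 := hs t
  rw [hv2c] at heq1
  have : pd₂ v₂ (t, c) = -pd₁ v₁ (t, c) := by linarith
  rw [this]; ring_nf; linarith [heq1]

include hv₁ hv₂ hP hEuler in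
lemma pd2P_eq {t c : ℝ} (hc1 : -1 ≤ c) (hc2 : c ≤ 1) :
    pd₂ P (t, c) = -(v₁ (t, c) * pd₁ v₂ (t, c) - v₂ (t, c) * pd₁ v₁ (t, c)) := by
  have key : pd₂ P (t,c) + (v₁ (t,c) * pd₁ v₂ (t,c) - v₂ (t,c) * pd₁ v₁ (t,c)) = 0 := by
    refine ext_zero (h := fun x => pd₂ P x + (v₁ x * pd₁ v₂ x - v₂ x * pd₁ v₁ x))
      ?_ (fun x hx => ?_) hc1 hc2 t
    · exact (cont_pd₂ hP).add ((hv₁.continuous.mul (cont_pd₁ hv₂)).sub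
        (hv₂.continuous.mul (cont_pd₁ hv₁)))
    · obtain ⟨h1, h2, h3⟩ := hEuler x hx
      have : pd₂ v₂ x = -pd₁ v₁ x := by linarith
      rw [this] at h2
      show pd₂ P x + (v₁ x * pd₁ v₂ x - v₂ x * pd₁ v₁ x) = 0
      linarith
  linarith

end main

lemma curv_nonneg' (v₁ v₂ : ℝ × ℝ → ℝ) (x : ℝ × ℝ) : 0 ≤ curv v₁ v₂ x :=
  div_nonneg (by positivity) (by positivity)

lemma curv_le' (v₁ v₂ : ℝ × ℝ → ℝ) (x : ℝ × ℝ) :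
    curv v₁ v₂ x ≤ pd₁ v₂ x ^ 2 + pd₁ v₁ x ^ 2 + pd₂ v₂ x ^ 2 + pd₂ v₁ x ^ 2 := by
  rcases eq_or_lt_of_le (by positivity : (0:ℝ) ≤ v₁ x ^ 2 + v₂ x ^ 2) with h | h
  · rw [curv, ← h, div_zero]; positivity
  · rw [curv, div_le_iff₀ h]
    nlinarith [sq_nonneg (v₁ x * pd₁ v₁ x + v₂ x * pd₁ v₂ x),
      sq_nonneg (v₁ x * pd₂ v₁ x + v₂ x * pd₂ v₂ x), sq_nonneg (v₁ x), sq_nonneg (v₂ x)]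

lemma amgm' {a d c δ : ℝ} (hδ : 0 < δ) (ha : 0 ≤ a) (hd : 0 ≤ d) (hc : 0 ≤ c)
    (h1 : a ^ 2 ≤ c * d) : 2 * δ * a ≤ δ ^ 2 * d + c := by
  rcases eq_or_lt_of_le hd with h | h
  · have : a = 0 := by nlinarith
    rw [this]; nlinarith
  · nlinarith [sq_nonneg (a - δ * d), mul_pos hδ h]

lemma G1_bound (v₁ v₂ : ℝ × ℝ → ℝ) (x : ℝ × ℝ) {δ : ℝ} (hδ : 0 < δ) :
    2 * δ * |v₁ x * pd₁ v₂ x - v₂ x * pd₁ v₁ x| ≤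
      δ ^ 2 * (v₁ x ^ 2 + v₂ x ^ 2) + curv v₁ v₂ x := by
  apply amgm' hδ (abs_nonneg _) (by positivity) (curv_nonneg' v₁ v₂ x)
  rw [sq_abs]
  rcases eq_or_lt_of_le (by positivity : (0:ℝ) ≤ v₁ x ^ 2 + v₂ x ^ 2) with h | h
  · have hv1 : v₁ x = 0 := by nlinarith [sq_nonneg (v₁ x), sq_nonneg (v₂ x)]
    have hv2 : v₂ x = 0 := by nlinarith [sq_nonneg (v₁ x), sq_nonneg (v₂ x)]
    rw [hv1, hv2]; simp
  · have hcd : curv v₁ v₂ x * (v₁ x ^ 2 + v₂ x ^ 2) =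
        (v₁ x * pd₁ v₂ x - v₂ x * pd₁ v₁ x) ^ 2 +
        (v₁ x * pd₂ v₂ x - v₂ x * pd₂ v₁ x) ^ 2 := div_mul_cancel₀ _ h.ne'
    nlinarith [sq_nonneg (v₁ x * pd₂ v₂ x - v₂ x * pd₂ v₁ x)]

/-! ### The cutoff function -/

abbrev φ (R t : ℝ) : ℝ := min (1 : ℝ) (max 0 (2 - |t| / R))

lemma φ_cont (R : ℝ) : Continuous (φ R) :=
  continuous_const.min (continuous_const.max
    (continuous_const.sub (continuous_abs.div_const R)))

lemma φ_zero {R t : ℝ} (hR : 0 < R) (h : 2 * R ≤ |t|) : φ R t = 0 := by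
  have h1 : 2 - |t| / R ≤ 0 := by
    rw [sub_nonpos, le_div_iff₀ hR]; linarith
  rw [φ, max_eq_left h1, min_eq_right (by norm_num)]

lemma φ_one {R t : ℝ} (hR : 0 < R) (h : |t| ≤ R) : φ R t = 1 := by
  have h1 : (1:ℝ) ≤ 2 - |t| / R := by
    have : |t| / R ≤ 1 := by rw [div_le_one hR]; linarith
    linarith
  rw [φ, max_eq_right (by linarith), min_eq_left h1]

lemma φ_right {R t : ℝ} (hR : 0 < R) (h1 : R ≤ t) (h2 : t ≤ 2 * R) : φ R t = 2 - t / R := by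
  have habs : |t| = t := abs_of_nonneg (by linarith)
  have hl : (0:ℝ) ≤ 2 - t / R := by rw [sub_nonneg, div_le_iff₀ hR]; linarith
  have hu : 2 - t / R ≤ 1 := by
    have : (1:ℝ) ≤ t / R := (one_le_div hR).2 h1
    linarith
  rw [φ, habs, max_eq_right hl, min_eq_right hu]

lemma φ_left {R t : ℝ} (hR : 0 < R) (h1 : -(2*R) ≤ t) (h2 : t ≤ -R) : φ R t = 2 + t / R := by
  have habs : |t| = -t := abs_of_nonpos (by nlinarith)
  have hl : (0:ℝ) ≤ 2 + t / R := by
    have : -2 ≤ t / R := by rw [neg_le, ← neg_div, div_le_iff₀ hR]; linarith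
    linarith
  have hu : 2 + t / R ≤ 1 := by
    have : t / R ≤ -1 := by rw [div_le_iff₀ hR]; linarith
    linarith
  rw [φ, habs, neg_div, sub_neg_eq_add, max_eq_right (by linarith), min_eq_right (by linarith)]

lemma cutoff_integral {R : ℝ} (hR : 0 < R) (q q' : ℝ → ℝ) (hq' : Continuous q')
    (hq : ∀ t, HasDerivAt q (q' t) t) :
    ∫ t : ℝ, φ R t * q' t =
      (1/R) * ((∫ t in R..(2*R), q t) - ∫ t in (-(2*R))..(-R), q t) := by
  have hdq : Differentiable ℝ q := fun t => (hq t).differentiableAt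
  have hqc : Continuous q := hdq.continuous
  have hf : Continuous (fun t => φ R t * q' t) := (φ_cont R).mul hq'
  have h1 : ∫ t : ℝ, φ R t * q' t = ∫ t in (-(2*R))..(2*R), φ R t * q' t := by
    rw [intervalIntegral.integral_of_le (by linarith),
      ← MeasureTheory.setIntegral_eq_integral_of_forall_compl_eq_zero
        (s := Ioc (-(2*R)) (2*R))]
    intro x hx
    have : 2 * R ≤ |x| := by
      rcases not_and_or.1 hx with h | h
      · push_neg at h; rw [abs_of_nonpos (by linarith)]; linarith
      · push_neg at h; rw [abs_of_nonneg (by linarith)]; linarith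
    rw [φ_zero hR this, zero_mul]
  have ii : ∀ a b : ℝ, IntervalIntegrable (fun t => φ R t * q' t) volume a b :=
    fun a b => hf.intervalIntegrable a b
  have hsplit : ∫ t in (-(2*R))..(2*R), φ R t * q' t =
      (∫ t in (-(2*R))..(-R), φ R t * q' t) + (∫ t in (-R)..R, φ R t * q' t)
        + ∫ t in R..(2*R), φ R t * q' t := by
    have A := intervalIntegral.integral_add_adjacent_intervals (ii (-(2*R)) (-R)) (ii (-R) (2*R))
    have B := intervalIntegral.integral_add_adjacent_intervals (ii (-R) R) (ii R (2*R))
    linarith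
  have hmid : ∫ t in (-R)..R, φ R t * q' t = q R - q (-R) := by
    rw [intervalIntegral.integral_congr (g := q') (fun t ht => by
      rw [uIcc_of_le (by linarith)] at ht
      rw [φ_one hR (abs_le.2 ⟨ht.1, ht.2⟩), one_mul])]
    exact intervalIntegral.integral_eq_sub_of_hasDerivAt (fun t _ => hq t)
      (hq'.intervalIntegrable _ _)
  have hright : ∫ t in R..(2*R), φ R t * q' t = -q R + (1/R) * ∫ t in R..(2*R), q t := by
    have e1 : ∫ t in R..(2*R), φ R t * q' t = ∫ t in R..(2*R), (2 - t/R) * q' t := by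
      refine intervalIntegral.integral_congr (fun t ht => ?_)
      rw [uIcc_of_le (by linarith)] at ht
      rw [φ_right hR ht.1 ht.2]
    have hF : ∀ t : ℝ, HasDerivAt (fun t => (2 - t/R) * q t)
        ((2 - t/R) * q' t + (-(1/R)) * q t) t := by
      intro t
      exact (((hasDerivAt_id t).div_const R).const_sub 2).mul (hq t) |>.congr_deriv
        (by simp only [id_eq]; ring)
    have e2 : ∫ t in R..(2*R), ((2 - t/R) * q' t + (-(1/R)) * q t) =
        (2 - 2*R/R) * q (2*R) - (2 - R/R) * q R :=
      intervalIntegral.integral_eq_sub_of_hasDerivAt (fun t _ => hF t)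
        (((continuous_const.sub (continuous_id.div_const R)).mul hq').add
          ((continuous_const.mul hqc)) |>.intervalIntegrable _ _)
    have e3 : ∫ t in R..(2*R), ((2 - t/R) * q' t + (-(1/R)) * q t) =
        (∫ t in R..(2*R), (2 - t/R) * q' t) + ∫ t in R..(2*R), (-(1/R)) * q t :=
      intervalIntegral.integral_add
        (((continuous_const.sub (continuous_id.div_const R)).mul hq').intervalIntegrable _ _)
        ((continuous_const.mul hqc).intervalIntegrable _ _)
    rw [e1]
    have h2R : 2*R/R = 2 := by field_simp
    have hRR : R/R = 1 := by field_simp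
    rw [h2R, hRR] at e2
    have e4 : ∫ t in R..(2*R), (-(1/R)) * q t = (-(1/R)) * ∫ t in R..(2*R), q t :=
      intervalIntegral.integral_const_mul _ _
    rw [e3, e4] at e2
    have : (2 - 2:ℝ) * q (2*R) - (2-1) * q R = -q R := by ring
    rw [this] at e2
    linarith
  have hleft : ∫ t in (-(2*R))..(-R), φ R t * q' t =
      q (-R) - (1/R) * ∫ t in (-(2*R))..(-R), q t := by
    have e1 : ∫ t in (-(2*R))..(-R), φ R t * q' t = ∫ t in (-(2*R))..(-R), (2 + t/R) * q' t := by
      refine intervalIntegral.integral_congr (fun t ht => ?_)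
      rw [uIcc_of_le (by linarith)] at ht
      rw [φ_left hR ht.1 ht.2]
    have hF : ∀ t : ℝ, HasDerivAt (fun t => (2 + t/R) * q t)
        ((2 + t/R) * q' t + (1/R) * q t) t := by
      intro t
      exact (((hasDerivAt_id t).div_const R).const_add 2).mul (hq t) |>.congr_deriv
        (by simp only [id_eq]; ring)
    have e2 : ∫ t in (-(2*R))..(-R), ((2 + t/R) * q' t + (1/R) * q t) =
        (2 + -R/R) * q (-R) - (2 + -(2*R)/R) * q (-(2*R)) :=
      intervalIntegral.integral_eq_sub_of_hasDerivAt (fun t _ => hF t)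
        (((continuous_const.add (continuous_id.div_const R)).mul hq').add
          ((continuous_const.mul hqc)) |>.intervalIntegrable _ _)
    have e3 : ∫ t in (-(2*R))..(-R), ((2 + t/R) * q' t + (1/R) * q t) =
        (∫ t in (-(2*R))..(-R), (2 + t/R) * q' t) + ∫ t in (-(2*R))..(-R), (1/R) * q t :=
      intervalIntegral.integral_add
        (((continuous_const.add (continuous_id.div_const R)).mul hq').intervalIntegrable _ _)
        ((continuous_const.mul hqc).intervalIntegrable _ _)
    have hRR : -R/R = -1 := by field_simp
    have h2R : -(2*R)/R = -2 := by field_simp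
    rw [hRR, h2R] at e2
    have e4 : ∫ t in (-(2*R))..(-R), (1/R) * q t = (1/R) * ∫ t in (-(2*R))..(-R), q t :=
      intervalIntegral.integral_const_mul _ _
    rw [e3, e4] at e2
    have : (2 + -1:ℝ) * q (-R) - (2 + -2) * q (-(2*R)) = q (-R) := by ring
    rw [this] at e2
    linarith
  rw [h1, hsplit, hmid, hright, hleft]
  ring

/-! ### Measure-theoretic lemmas -/

section meas
variable {v₁ v₂ : ℝ × ℝ → ℝ} (hv₁ : ContDiff ℝ 1 v₁) (hv₂ : ContDiff ℝ 1 v₂)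

def Hfun (v₁ v₂ : ℝ × ℝ → ℝ) (t : ℝ) : ℝ≥0∞ :=
  ∫⁻ s in Ioo (-1:ℝ) 1, ENNReal.ofReal (curv v₁ v₂ (t, s))

include hv₁ hv₂ in
lemma curv_measurable : Measurable (curv v₁ v₂) := by
  apply Measurable.div
  · exact ((((hv₁.continuous.mul (cont_pd₁ hv₂)).sub (hv₂.continuous.mul (cont_pd₁ hv₁))).pow 2).add
      (((hv₁.continuous.mul (cont_pd₂ hv₂)).sub (hv₂.continuous.mul (cont_pd₂ hv₁))).pow 2)).measurable
  · exact ((hv₁.continuous.pow 2).add (hv₂.continuous.pow 2)).measurable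

include hv₁ hv₂ in
lemma curv_ofReal_measurable : Measurable fun x : ℝ × ℝ => ENNReal.ofReal (curv v₁ v₂ x) :=
  ENNReal.measurable_ofReal.comp (curv_measurable hv₁ hv₂)

include hv₁ hv₂ in
lemma measurable_Hfun : Measurable (Hfun v₁ v₂) := by
  exact Measurable.lintegral_prod_right
    (f := fun t s => ENNReal.ofReal (curv v₁ v₂ (t, s))) (curv_ofReal_measurable hv₁ hv₂)

include hv₁ hv₂ in
lemma lintegral_Hfun :
    ∫⁻ t : ℝ, Hfun v₁ v₂ t ∂volume = ∫⁻ x in strip, ENNReal.ofReal (curv v₁ v₂ x) ∂volume := by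
  have hstrip : strip = (univ : Set ℝ) ×ˢ Ioo (-1:ℝ) 1 := by
    ext x; simp [strip, Set.mem_prod]
  rw [hstrip, Measure.volume_eq_prod, ← Measure.prod_restrict, Measure.restrict_univ,
    MeasureTheory.lintegral_prod _ ((curv_ofReal_measurable hv₁ hv₂).aemeasurable)]
  simp only [Hfun]

include hv₁ hv₂ in
lemma curv_slice_integrable (t : ℝ) :
    IntervalIntegrable (fun s => curv v₁ v₂ (t, s)) volume (-1) 1 := by
  rw [intervalIntegrable_iff]
  have c1 : Continuous fun s : ℝ => ((t, s) : ℝ × ℝ) := continuous_const.prodMk continuous_id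
  have hK : IntegrableOn (fun s : ℝ =>
      pd₁ v₂ (t,s) ^ 2 + pd₁ v₁ (t,s) ^ 2 + pd₂ v₂ (t,s) ^ 2 + pd₂ v₁ (t,s) ^ 2)
      (uIoc (-1:ℝ) 1) := by
    refine Continuous.integrableOn_uIoc ?_
    exact (((((cont_pd₁ hv₂).comp c1).pow 2).add (((cont_pd₁ hv₁).comp c1).pow 2)).add
      ((((cont_pd₂ hv₂).comp c1).pow 2))).add ((((cont_pd₂ hv₁).comp c1).pow 2)) |>.congr
      (by intro s; simp [Function.comp])
  refine hK.mono' (((curv_measurable hv₁ hv₂).comp c1.measurable).aestronglyMeasurable) ?_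
  refine ae_of_all _ fun s => ?_
  rw [Real.norm_eq_abs, abs_of_nonneg (curv_nonneg' v₁ v₂ (t, s))]
  exact curv_le' v₁ v₂ (t, s)

include hv₁ hv₂ in
lemma curv_slice_eq (t : ℝ) :
    ∫ s in (-1:ℝ)..1, curv v₁ v₂ (t, s) = (Hfun v₁ v₂ t).toReal := by
  have c1 : Continuous fun s : ℝ => ((t, s) : ℝ × ℝ) := continuous_const.prodMk continuous_id
  rw [intervalIntegral.integral_of_le (by norm_num : (-1:ℝ) ≤ 1),
    MeasureTheory.integral_eq_lintegral_of_nonneg_ae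
      (ae_of_all _ fun s => curv_nonneg' v₁ v₂ (t, s))
      (((curv_measurable hv₁ hv₂).comp c1.measurable).aestronglyMeasurable)]
  congr 1
  rw [Hfun, Measure.restrict_congr_set Ioo_ae_eq_Ioc]

end meas

/-! ### Tail of a finite integral -/

lemma tail_tendsto {H : ℝ → ℝ≥0∞} (hH : Measurable H) (hfin : ∫⁻ t, H t ∂volume ≠ ⊤) :
    Tendsto (fun R : ℝ => ∫⁻ t in {u : ℝ | R ≤ |u|}, H t) atTop (nhds 0) := by
  set ν : Measure ℝ := volume.withDensity H with hν
  have hmS : ∀ R : ℝ, MeasurableSet {u : ℝ | R ≤ |u|} := fun R =>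
    continuous_abs.measurable measurableSet_Ici
  have hνS : ∀ R : ℝ, ν {u : ℝ | R ≤ |u|} = ∫⁻ t in {u : ℝ | R ≤ |u|}, H t := fun R =>
    withDensity_apply H (hmS R)
  have hanti : Antitone fun R : ℝ => {u : ℝ | R ≤ |u|} := by
    intro a b hab u hu
    exact le_trans hab hu
  have hempty : ⋂ R : ℝ, {u : ℝ | R ≤ |u|} = (∅ : Set ℝ) := by
    ext u
    simp only [mem_iInter, mem_setOf_eq, mem_empty_iff_false, iff_false, not_forall, not_le]
    exact ⟨|u| + 1, by linarith [abs_nonneg u]⟩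
  have hfin' : ∃ R : ℝ, ν {u : ℝ | R ≤ |u|} ≠ ⊤ := by
    refine ⟨0, ?_⟩
    rw [hνS 0]
    exact ne_top_of_le_ne_top hfin (MeasureTheory.setLIntegral_le_lintegral _ _)
  have := MeasureTheory.tendsto_measure_iInter_atTop (μ := ν)
    (s := fun R : ℝ => {u : ℝ | R ≤ |u|})
    (fun R => (hmS R).nullMeasurableSet) hanti hfin'
  rw [hempty] at this
  simp only [measure_empty] at this
  have heq : (⇑ν ∘ fun R : ℝ => {u : ℝ | R ≤ |u|}) =
      fun R : ℝ => ∫⁻ t in {u : ℝ | R ≤ |u|}, H t := funext fun R => hνS R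
  rwa [heq] at this

end Aux

/-- for steady flows in the strip with finite total curvature, the
cutoff boundary flux tends to zero as the cutoff parameter goes to infinity. -/
theorem statement18
    (v₁ v₂ P : ℝ × ℝ → ℝ)
    (hv₁ : ContDiff ℝ 1 v₁) (hv₂ : ContDiff ℝ 1 v₂) (hP : ContDiff ℝ 1 P)
    (hEuler : EulerOn v₁ v₂ P strip)
    (hslip : ∀ t : ℝ, v₂ (t, 1) = 0 ∧ v₂ (t, -1) = 0)
    (C : ℝ) (hC : 0 < C)
    (hgrow : ∀ R : ℝ, R > 100 → ∀ x ∈ stripCl, |x.1| ≤ R →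
      nrm (v₁ x) (v₂ x) ≤ C * Real.sqrt R)
    (hfin : ∫⁻ x in strip, ENNReal.ofReal (curv v₁ v₂ x) ∂volume < ⊤) :
    Tendsto
      (fun R : ℝ =>
        (∫ t : ℝ, min (1 : ℝ) (max 0 (2 - |t| / R)) * (v₁ (t, 1) * pd₂ v₂ (t, 1))) -
        ∫ t : ℝ, min (1 : ℝ) (max 0 (2 - |t| / R)) * (v₁ (t, -1) * pd₂ v₂ (t, -1)))
      atTop (nhds 0) := by
  classical
  -- the boundary functions
  set q : ℝ → ℝ := fun t => P (t, 1) - P (t, -1) with hqdef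
  set q' : ℝ → ℝ := fun t => pd₁ P (t, 1) - pd₁ P (t, -1) with hq'def
  have hq : ∀ t, HasDerivAt q (q' t) t := fun t =>
    (hasDerivAt_line1 hP 1 t).sub (hasDerivAt_line1 hP (-1) t)
  have hq'c : Continuous q' :=
    ((cont_pd₁ hP).comp (continuous_id.prodMk continuous_const)).sub
      ((cont_pd₁ hP).comp (continuous_id.prodMk continuous_const))
  -- total curvature is finite
  have h_tot : ∫⁻ t, Hfun v₁ v₂ t ∂volume ≠ ⊤ := by
    rw [lintegral_Hfun hv₁ hv₂]; exact hfin.ne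
  -- the tail
  set T : ℝ → ENNReal := fun R => ∫⁻ t in {u : ℝ | R ≤ |u|}, Hfun v₁ v₂ t with hTdef
  have hT_le : ∀ R, T R ≤ ∫⁻ t, Hfun v₁ v₂ t ∂volume := fun R =>
    MeasureTheory.setLIntegral_le_lintegral _ _
  have hT_ne : ∀ R, T R ≠ ⊤ := fun R => ne_top_of_le_ne_top h_tot (hT_le R)
  have hT0 : Tendsto T atTop (nhds 0) := tail_tendsto (measurable_Hfun hv₁ hv₂) h_tot
  -- growth of |v|²
  have hsq : ∀ R : ℝ, R > 100 → ∀ x ∈ stripCl, |x.1| ≤ 2*R →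
      v₁ x ^ 2 + v₂ x ^ 2 ≤ C ^ 2 * (2*R) := by
    intro R hR x hx hx1
    have h := hgrow (2*R) (by linarith) x hx hx1
    have h2R : (0:ℝ) ≤ 2*R := by linarith
    have hnn : (0:ℝ) ≤ v₁ x ^ 2 + v₂ x ^ 2 := by positivity
    have e1 : nrm (v₁ x) (v₂ x) ^ 2 = v₁ x ^ 2 + v₂ x ^ 2 := Real.sq_sqrt hnn
    have e2 : (C * Real.sqrt (2*R)) ^ 2 = C ^ 2 * (2*R) := by
      rw [mul_pow, Real.sq_sqrt h2R]
    calc v₁ x ^ 2 + v₂ x ^ 2 = nrm (v₁ x) (v₂ x) ^ 2 := e1.symm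
      _ ≤ (C * Real.sqrt (2*R)) ^ 2 :=
          pow_le_pow_left₀ (Real.sqrt_nonneg _) h 2
      _ = C ^ 2 * (2*R) := e2
  -- Step A: rewrite the difference of cutoff integrals for R > 100
  have stepA : ∀ R : ℝ, R > 100 →
      ((∫ t : ℝ, min (1 : ℝ) (max 0 (2 - |t| / R)) * (v₁ (t, 1) * pd₂ v₂ (t, 1))) -
        ∫ t : ℝ, min (1 : ℝ) (max 0 (2 - |t| / R)) * (v₁ (t, -1) * pd₂ v₂ (t, -1)))
      = (1/R) * ((∫ t in R..(2*R), q t) - ∫ t in (-(2*R))..(-R), q t) := by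
    intro R hR
    have hR0 : (0:ℝ) < R := by linarith
    have e₁ : ∀ t : ℝ, v₁ (t, 1) * pd₂ v₂ (t, 1) = pd₁ P (t, 1) :=
      boundary_id hv₁ hv₂ hP hEuler (by norm_num) (by norm_num) (fun t => (hslip t).1)
    have e₂ : ∀ t : ℝ, v₁ (t, -1) * pd₂ v₂ (t, -1) = pd₁ P (t, -1) :=
      boundary_id hv₁ hv₂ hP hEuler (by norm_num) (by norm_num) (fun t => (hslip t).2)
    have hint : ∀ g : ℝ → ℝ, Continuous g → Integrable (fun t => φ R t * g t) := by
      intro g hg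
      apply Continuous.integrable_of_hasCompactSupport ((φ_cont R).mul hg)
      apply HasCompactSupport.intro (isCompact_Icc (a := -(2*R)) (b := 2*R))
      intro x hx
      have : 2 * R ≤ |x| := by
        rcases not_and_or.1 hx with h | h
        · push_neg at h; rw [abs_of_nonpos (by linarith)]; linarith
        · push_neg at h; rw [abs_of_nonneg (by linarith)]; linarith
      rw [Pi.mul_apply, φ_zero hR0 this, zero_mul]
    have cg₁ : Continuous fun t : ℝ => pd₁ P (t, 1) :=
      (cont_pd₁ hP).comp (continuous_id.prodMk continuous_const)
    have cg₂ : Continuous fun t : ℝ => pd₁ P (t, -1) :=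
      (cont_pd₁ hP).comp (continuous_id.prodMk continuous_const)
    have r₁ : (∫ t : ℝ, min (1 : ℝ) (max 0 (2 - |t| / R)) * (v₁ (t, 1) * pd₂ v₂ (t, 1)))
        = ∫ t : ℝ, φ R t * pd₁ P (t, 1) := by
      congr 1; funext t; rw [e₁ t]
    have r₂ : (∫ t : ℝ, min (1 : ℝ) (max 0 (2 - |t| / R)) * (v₁ (t, -1) * pd₂ v₂ (t, -1)))
        = ∫ t : ℝ, φ R t * pd₁ P (t, -1) := by
      congr 1; funext t; rw [e₂ t]
    rw [r₁, r₂, ← MeasureTheory.integral_sub (hint _ cg₁) (hint _ cg₂)]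
    have : (fun t => φ R t * pd₁ P (t, 1) - φ R t * pd₁ P (t, -1))
        = fun t => φ R t * q' t := by
      funext t; rw [hq'def]; ring
    rw [this]
    exact cutoff_integral hR0 q q' hq'c hq
  -- Step B: pointwise bound on |q|
  have stepB : ∀ R : ℝ, R > 100 → ∀ δ : ℝ, 0 < δ → ∀ t : ℝ, |t| ≤ 2*R →
      |q t| ≤ δ * (C ^ 2 * (2*R)) + (1/(2*δ)) * (Hfun v₁ v₂ t).toReal := by
    intro R hR δ hδ t ht
    set B : ℝ := C ^ 2 * (2*R) with hBdef
    have hB : 0 ≤ B := by positivity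
    have h2δ : (0:ℝ) < 2 * δ := by linarith
    have c1 : Continuous fun s : ℝ => ((t, s) : ℝ × ℝ) := continuous_const.prodMk continuous_id
    have hftc : ∫ s in (-1:ℝ)..1, pd₂ P (t, s) = q t := by
      rw [hqdef]
      exact intervalIntegral.integral_eq_sub_of_hasDerivAt
        (fun s _ => hasDerivAt_line2 hP t s) (((cont_pd₂ hP).comp c1).intervalIntegrable _ _)
    set g : ℝ → ℝ := fun s => δ * B / 2 + (1/(2*δ)) * curv v₁ v₂ (t, s) with hgdef
    have hg_int : IntervalIntegrable g volume (-1) 1 :=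
      (intervalIntegrable_const).add ((curv_slice_integrable hv₁ hv₂ t).const_mul _)
    have hg_nonneg : ∀ s : ℝ, 0 ≤ g s := fun s => by
      have := curv_nonneg' v₁ v₂ (t, s)
      rw [hgdef]
      positivity
    have hcomp : ∀ s ∈ Set.uIcc (-1:ℝ) 1, |pd₂ P (t, s)| ≤ g s := by
      intro s hs
      rw [uIcc_of_le (by norm_num)] at hs
      have hP2 : pd₂ P (t, s) = -(v₁ (t,s) * pd₁ v₂ (t,s) - v₂ (t,s) * pd₁ v₁ (t,s)) :=
        pd2P_eq hv₁ hv₂ hP hEuler hs.1 hs.2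
      have hb := G1_bound v₁ v₂ (t, s) hδ
      have hv : v₁ (t,s) ^ 2 + v₂ (t,s) ^ 2 ≤ B :=
        hsq R hR (t, s) ⟨hs.1, hs.2⟩ ht
      rw [hP2, abs_neg, ← mul_le_mul_iff_right₀ h2δ]
      have hg2 : 2*δ*(g s) = δ^2*B + curv v₁ v₂ (t,s) := by
        rw [hgdef]; field_simp
      rw [hg2]
      refine hb.trans ?_
      have : δ ^ 2 * (v₁ (t,s) ^ 2 + v₂ (t,s) ^ 2) ≤ δ ^ 2 * B :=
        mul_le_mul_of_nonneg_left hv (by positivity)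
      linarith
    have habs : |q t| ≤ |∫ s in (-1:ℝ)..1, g s| := by
      rw [← hftc]
      have := intervalIntegral.norm_integral_le_of_norm_le (f := fun s => pd₂ P (t, s))
        (g := g) (μ := volume) (a := (-1:ℝ)) (b := 1) (by norm_num)
          ((ae_restrict_iff' measurableSet_Ioc).1 ?_) hg_int
      · simpa [Real.norm_eq_abs] using this.trans (le_abs_self _)
      · rw [← uIoc_of_le (by norm_num : (-1:ℝ) ≤ 1)]
        refine MeasureTheory.ae_restrict_of_forall_mem measurableSet_uIoc fun s hs => ?_
        rw [Real.norm_eq_abs]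
        exact hcomp s (uIoc_subset_uIcc hs)
    have hgval : ∫ s in (-1:ℝ)..1, g s = δ * B + (1/(2*δ)) * (Hfun v₁ v₂ t).toReal := by
      rw [hgdef, intervalIntegral.integral_add intervalIntegrable_const
        ((curv_slice_integrable hv₁ hv₂ t).const_mul _),
        intervalIntegral.integral_const, intervalIntegral.integral_const_mul,
        curv_slice_eq hv₁ hv₂ t]
      simp only [smul_eq_mul]
      ring
    rw [hgval] at habs
    have : 0 ≤ δ * B + (1/(2*δ)) * (Hfun v₁ v₂ t).toReal := by positivity
    rwa [abs_of_nonneg this] at habs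
  -- Step C: bound on the interval integrals of q
  have stepC : ∀ R : ℝ, R > 100 → ∀ δ : ℝ, 0 < δ → ∀ a b : ℝ, a ≤ b →
      Set.Ioc a b ⊆ {u : ℝ | R ≤ |u|} → Set.Ioc a b ⊆ {u : ℝ | |u| ≤ 2*R} →
      |∫ t in a..b, q t| ≤ (b - a) * (δ * (C ^ 2 * (2*R))) + (1/(2*δ)) * (T R).toReal := by
    intro R hR δ hδ a b hab hsub1 hsub2
    have h2δ : (0:ℝ) < 2 * δ := by linarith
    set B : ℝ := C ^ 2 * (2*R) with hBdef
    have hB : 0 ≤ B := by positivity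
    -- integrability of (Hfun ·).toReal on Ioc a b
    have hHm : AEMeasurable (Hfun v₁ v₂) (volume.restrict (Set.Ioc a b)) :=
      (measurable_Hfun hv₁ hv₂).aemeasurable
    have hfinIoc : ∫⁻ t in Set.Ioc a b, Hfun v₁ v₂ t ∂volume ≠ ⊤ :=
      ne_top_of_le_ne_top h_tot (MeasureTheory.setLIntegral_le_lintegral _ _)
    have hHint : IntegrableOn (fun t => (Hfun v₁ v₂ t).toReal) (Set.Ioc a b) :=
      MeasureTheory.integrable_toReal_of_lintegral_ne_top hHm hfinIoc
    have hHae : ∀ᵐ t ∂(volume.restrict (Set.Ioc a b)), Hfun v₁ v₂ t < ⊤ := by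
      refine MeasureTheory.ae_restrict_of_ae ?_
      exact MeasureTheory.ae_lt_top (measurable_Hfun hv₁ hv₂) h_tot
    -- the comparison function
    set g₂ : ℝ → ℝ := fun t => δ * B + (1/(2*δ)) * (Hfun v₁ v₂ t).toReal with hg₂def
    have hg₂int : IntervalIntegrable g₂ volume a b := by
      rw [intervalIntegrable_iff, uIoc_of_le hab]
      have hco : IntegrableOn (fun _ : ℝ => δ * B) (Set.Ioc a b) volume :=
        integrableOn_const measure_Ioc_lt_top.ne
      exact hco.add (hHint.const_mul _)
    have h1 : |∫ t in a..b, q t| ≤ |∫ t in a..b, g₂ t| := by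
      have := intervalIntegral.norm_integral_le_of_norm_le (f := q) (g := g₂) (μ := volume)
        (a := a) (b := b) hab ((ae_restrict_iff' measurableSet_Ioc).1 ?_) hg₂int
      · simpa [Real.norm_eq_abs] using this.trans (le_abs_self _)
      · rw [← uIoc_of_le hab]
        refine MeasureTheory.ae_restrict_of_forall_mem measurableSet_uIoc fun t hti => ?_
        rw [uIoc_of_le hab] at hti
        rw [Real.norm_eq_abs]
        exact stepB R hR δ hδ t (hsub2 hti)
    have h2 : ∫ t in a..b, g₂ t =
        (b - a) * (δ * B) + (1/(2*δ)) * ∫ t in a..b, (Hfun v₁ v₂ t).toReal := by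
      rw [hg₂def, intervalIntegral.integral_add (by
          rw [intervalIntegrable_iff, uIoc_of_le hab]
          exact integrableOn_const measure_Ioc_lt_top.ne)
        (by
          rw [intervalIntegrable_iff, uIoc_of_le hab]
          exact hHint.const_mul _),
        intervalIntegral.integral_const, intervalIntegral.integral_const_mul]
      simp only [smul_eq_mul]
    have h3 : ∫ t in a..b, (Hfun v₁ v₂ t).toReal ≤ (T R).toReal := by
      rw [intervalIntegral.integral_of_le hab,
        MeasureTheory.integral_toReal hHm hHae]
      refine ENNReal.toReal_mono (hT_ne R) ?_
      exact MeasureTheory.lintegral_mono_set hsub1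
    have h4 : 0 ≤ ∫ t in a..b, g₂ t := by
      rw [intervalIntegral.integral_of_le hab]
      refine MeasureTheory.setIntegral_nonneg measurableSet_Ioc fun t _ => ?_
      rw [hg₂def]
      have := ENNReal.toReal_nonneg (a := Hfun v₁ v₂ t)
      positivity
    rw [abs_of_nonneg h4, h2] at h1
    have h5 : (1/(2*δ)) * ∫ t in a..b, (Hfun v₁ v₂ t).toReal ≤ (1/(2*δ)) * (T R).toReal :=
      mul_le_mul_of_nonneg_left h3 (by positivity)
    linarith
  -- final limit argument
  rw [Metric.tendsto_atTop]
  intro ε hε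
  set η : ℝ := ε / (8 * C ^ 2 + 8) with hηdef
  have hη : 0 < η := by positivity
  have hη1 : 4 * η * C ^ 2 ≤ ε / 2 := by
    have hu : ε = η * (8 * C ^ 2 + 8) := by rw [hηdef]; field_simp
    have h2 : ε / 2 = η * (4 * C ^ 2 + 4) := by rw [hu]; ring
    rw [h2]
    nlinarith [hη]
  have hc_pos : (0:ENNReal) < ENNReal.ofReal (ε * η / 2) := ENNReal.ofReal_pos.2 (by positivity)
  have hev : ∀ᶠ R in atTop, T R < ENNReal.ofReal (ε * η / 2) :=
    hT0.eventually_lt_const hc_pos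
  obtain ⟨N₀, hN₀⟩ := eventually_atTop.1 hev
  refine ⟨max N₀ 101, fun R hRN => ?_⟩
  have hR : R > 100 := lt_of_lt_of_le (by norm_num) (le_trans (le_max_right _ _) hRN)
  have hR0 : (0:ℝ) < R := by linarith
  have hTR : T R < ENNReal.ofReal (ε * η / 2) := hN₀ R (le_trans (le_max_left _ _) hRN)
  have hTRr : (T R).toReal < ε * η / 2 :=
    (ENNReal.lt_ofReal_iff_toReal_lt (hT_ne R)).1 hTR
  set x : ℝ := (T R).toReal with hxdef
  have hx0 : 0 ≤ x := ENNReal.toReal_nonneg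
  set δ : ℝ := η / R with hδdef
  have hδpos : 0 < δ := by positivity
  -- the two interval-integral bounds
  have sub1 : Set.Ioc R (2*R) ⊆ {u : ℝ | R ≤ |u|} := fun u hu => by
    have : R < u := hu.1
    simp only [mem_setOf_eq]
    rw [abs_of_nonneg (by linarith)]
    linarith
  have sub2 : Set.Ioc R (2*R) ⊆ {u : ℝ | |u| ≤ 2*R} := fun u hu => by
    simp only [mem_setOf_eq]
    rw [abs_of_nonneg (by linarith [hu.1])]
    exact hu.2
  have sub1' : Set.Ioc (-(2*R)) (-R) ⊆ {u : ℝ | R ≤ |u|} := fun u hu => by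
    simp only [mem_setOf_eq]
    rw [abs_of_nonpos (by linarith [hu.2])]
    linarith [hu.2]
  have sub2' : Set.Ioc (-(2*R)) (-R) ⊆ {u : ℝ | |u| ≤ 2*R} := fun u hu => by
    simp only [mem_setOf_eq]
    rw [abs_of_nonpos (by linarith [hu.2])]
    linarith [hu.1]
  have hb1 := stepC R hR δ hδpos R (2*R) (by linarith) sub1 sub2
  have hb2 := stepC R hR δ hδpos (-(2*R)) (-R) (by linarith) sub1' sub2'
  rw [← hxdef] at hb1 hb2
  have e1 : (2*R - R) * (δ * (C ^ 2 * (2*R))) = 2*η*C^2*R := by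
    rw [hδdef]; field_simp; ring
  have e2 : (-R - -(2*R)) * (δ * (C ^ 2 * (2*R))) = 2*η*C^2*R := by
    rw [hδdef]; field_simp; ring
  have e3 : (1/(2*δ)) = R/(2*η) := by
    rw [hδdef]; field_simp
  rw [e1, e3] at hb1
  rw [e2, e3] at hb2
  -- assemble
  rw [Real.dist_eq, sub_zero, stepA R hR]
  set I₁ : ℝ := ∫ t in R..(2*R), q t with hI₁
  set I₂ : ℝ := ∫ t in (-(2*R))..(-R), q t with hI₂
  have habs : |I₁ - I₂| ≤ |I₁| + |I₂| := abs_sub _ _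
  have hsum : |I₁ - I₂| ≤ 4*η*C^2*R + (R/η)*x := by
    have : R/(2*η)*x + R/(2*η)*x = (R/η)*x := by field_simp; ring
    linarith
  have hmul : |(1/R) * (I₁ - I₂)| ≤ (1/R) * (4*η*C^2*R + (R/η)*x) := by
    rw [abs_mul, abs_of_nonneg (by positivity : (0:ℝ) ≤ 1/R)]
    exact mul_le_mul_of_nonneg_left hsum (by positivity)
  have heq : (1/R) * (4*η*C^2*R + (R/η)*x) = 4*η*C^2 + (1/η)*x := by
    field_simp
  rw [heq] at hmul
  have hlast : (1/η)*x < ε/2 := by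
    have : (1/η)*x < (1/η)*(ε * η / 2) :=
      mul_lt_mul_of_pos_left hTRr (by positivity)
    have e : (1/η)*(ε * η / 2) = ε/2 := by field_simp
    linarith [e ▸ this]
  calc |(1/R) * (I₁ - I₂)| ≤ 4*η*C^2 + (1/η)*x := hmul
    _ < ε/2 + ε/2 := by
        have : 4*η*C^2 = 4*η*C^2 := rfl
        have h4 : 4*η*C^2 ≤ ε/2 := by linarith [hη1]
        linarith
    _ = ε := by ring
end
end
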